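/- arXiv:2212.05928 — 7 statements merged into one kernel-verified Lean document; each statement's English description precedes it below -/
import Mathlib

section
/- Under the hypotheses of the previous statement, if additionally V : G → ℝ satisfies inf_G V =: c₀ > 0 and p ≥ 2, then for all x ∈ G, (1/2) ∑_{y∈G} ω(x,y)(1 - e^{ξ(y)-ξ(x)})² - p V(x) μ(x) ≤ ((α²/2) e^{2sα} - c₀ p) μ(x). -/
lemma one_sub_exp_sq_le (t : ℝ) : (1 - Real.exp t)^2 ≤ t^2 * Real.exp (2 * |t|) := by
  have key : |1 - Real.exp t| ≤ |t| * Real.exp |t| := by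
    rcases le_or_gt 0 t with ht | ht
    · rw [abs_of_nonpos (by simpa using Real.one_le_exp ht), abs_of_nonneg ht]
      have h1 : 1 - t ≤ Real.exp (-t) := by linarith [Real.add_one_le_exp (-t)]
      have h2 : (1 - t) * Real.exp t ≤ Real.exp (-t) * Real.exp t :=
        mul_le_mul_of_nonneg_right h1 (Real.exp_pos t).le
      rw [← Real.exp_add] at h2
      simp at h2
      nlinarith
    · rw [abs_of_nonneg (by simpa using Real.exp_le_one_iff.2 ht.le), abs_of_neg ht]
      have h1 : 1 + t ≤ Real.exp t := by linarith [Real.add_one_le_exp t]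
      have h2 : (1 : ℝ) ≤ Real.exp (-t) := Real.one_le_exp (by linarith)
      nlinarith
  calc (1 - Real.exp t)^2 = |1 - Real.exp t|^2 := (sq_abs _).symm
    _ ≤ (|t| * Real.exp |t|)^2 := by
        apply pow_le_pow_left₀ (abs_nonneg _) key
    _ = t^2 * Real.exp (2 * |t|) := by
        rw [mul_pow, sq_abs, ← Real.exp_nat_mul]
        ring_nf

theorem stmt9 {G : Type*} [Countable G]
    (ω : G → G → ℝ) (μ : G → ℝ) (d : G → G → ℝ)
    (hω_nonneg : ∀ x y, 0 ≤ ω x y)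
    (hω_symm : ∀ x y, ω x y = ω y x)
    (hω_diag : ∀ x, ω x x = 0)
    (hμ : ∀ x, 0 < μ x)
    (hd_self : ∀ x, d x x = 0)
    (hd_symm : ∀ x y, d x y = d y x)
    (hd_tri : ∀ x y z, d x y ≤ d x z + d z y)
    (s : ℝ) (hs : 0 ≤ s) (hjump : ∀ x y, 0 < ω x y → d x y ≤ s)
    (hwsum : ∀ x, Summable fun y => ω x y * (d x y)^2)
    (hintr : ∀ x, ∑' y, ω x y * (d x y)^2 ≤ μ x)
    (x₀ : G) (α R δ : ℝ) (hα : 0 < α) (hR : 0 < R) (hδ : 0 < δ) (hδ1 : δ < 1)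
    (V : G → ℝ) (c₀ : ℝ) (hc₀ : 0 < c₀) (hV : ∀ x, c₀ ≤ V x)
    (p : ℝ) (hp : 2 ≤ p) :
    ∀ x : G,
      (1/2) * (∑' y, ω x y *
          (1 - Real.exp ((-α * max (d y x₀ - δ * R) 0) - (-α * max (d x x₀ - δ * R) 0)))^2)
        - p * V x * μ x
        ≤ ((α^2 / 2) * Real.exp (2 * s * α) - c₀ * p) * μ x := by
  intro x
  set C : ℝ := Real.exp (2 * s * α) with hC
  have hterm : ∀ y, ω x y *
      (1 - Real.exp ((-α * max (d y x₀ - δ * R) 0) - (-α * max (d x x₀ - δ * R) 0)))^2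
      ≤ α^2 * C * (ω x y * (d x y)^2) := by
    intro y
    rcases (hω_nonneg x y).eq_or_lt with h0 | h0
    · rw [← h0]; simp [mul_nonneg]
    set t : ℝ := (-α * max (d y x₀ - δ * R) 0) - (-α * max (d x x₀ - δ * R) 0) with ht
    have hdxy : d x y ≤ s := hjump x y h0
    have hdnonneg : 0 ≤ d x y := by
      have := hd_tri x x y
      rw [hd_self] at this
      nlinarith [hd_symm x y]
    have habs : |t| ≤ α * d x y := by
      have h1 : |max (d y x₀ - δ * R) 0 - max (d x x₀ - δ * R) 0| ≤ d x y := by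
        calc |max (d y x₀ - δ * R) 0 - max (d x x₀ - δ * R) 0|
            ≤ |(d y x₀ - δ * R) - (d x x₀ - δ * R)| := abs_max_sub_max_le_abs _ _ _
          _ = |d y x₀ - d x x₀| := by ring_nf
          _ ≤ d x y := by
              rw [abs_le]
              constructor
              · have := hd_tri x x₀ y
                linarith
              · have := hd_tri y x₀ x
                rw [hd_symm y x] at this
                linarith
      have heq : t = α * (max (d x x₀ - δ * R) 0 - max (d y x₀ - δ * R) 0) := by
        rw [ht]; ring
      rw [heq, abs_mul, abs_of_pos hα, abs_sub_comm]
      exact mul_le_mul_of_nonneg_left h1 hα.le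
    have hsq : (1 - Real.exp t)^2 ≤ α^2 * (d x y)^2 * C := by
      calc (1 - Real.exp t)^2 ≤ t^2 * Real.exp (2 * |t|) := one_sub_exp_sq_le t
        _ ≤ (α * d x y)^2 * Real.exp (2 * (s * α)) := by
            apply mul_le_mul
            · calc t^2 = |t|^2 := (sq_abs t).symm
                _ ≤ (α * d x y)^2 := pow_le_pow_left₀ (abs_nonneg t) habs 2
            · apply Real.exp_le_exp.2
              have : |t| ≤ s * α := le_trans habs (by nlinarith)
              linarith
            · positivity
            · positivity
        _ = α^2 * (d x y)^2 * C := by rw [hC]; ring_nf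
    calc ω x y * (1 - Real.exp t)^2 ≤ ω x y * (α^2 * (d x y)^2 * C) :=
          mul_le_mul_of_nonneg_left hsq (hω_nonneg x y)
      _ = α^2 * C * (ω x y * (d x y)^2) := by ring
  have hsummand_nonneg : ∀ y, 0 ≤ ω x y *
      (1 - Real.exp ((-α * max (d y x₀ - δ * R) 0) - (-α * max (d x x₀ - δ * R) 0)))^2 :=
    fun y => mul_nonneg (hω_nonneg x y) (sq_nonneg _)
  have hsum2 : Summable fun y => α^2 * C * (ω x y * (d x y)^2) := (hwsum x).mul_left _
  have hsum1 : Summable fun y => ω x y *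
      (1 - Real.exp ((-α * max (d y x₀ - δ * R) 0) - (-α * max (d x x₀ - δ * R) 0)))^2 :=
    Summable.of_nonneg_of_le hsummand_nonneg hterm hsum2
  have htsum : (∑' y, ω x y *
      (1 - Real.exp ((-α * max (d y x₀ - δ * R) 0) - (-α * max (d x x₀ - δ * R) 0)))^2)
      ≤ α^2 * C * μ x := by
    calc _ ≤ ∑' y, α^2 * C * (ω x y * (d x y)^2) := Summable.tsum_le_tsum hterm hsum1 hsum2
      _ = α^2 * C * ∑' y, ω x y * (d x y)^2 := by rw [tsum_mul_left]
      _ ≤ α^2 * C * μ x := by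
          apply mul_le_mul_of_nonneg_left (hintr x); positivity
  have hVx : c₀ * p * μ x ≤ p * V x * μ x := by
    have h1 : c₀ * p ≤ V x * p := mul_le_mul_of_nonneg_right (hV x) (by linarith)
    nlinarith [(hμ x).le]
  nlinarith [(hμ x).le]
end

section
/- Let d be a pseudo metric on a weighted graph (G, ω, μ) with finite jump size s which is 1-intrinsic with bound C₀, i.e. (1/μ(x)) ∑_y ω(x,y) d(x,y) ≤ C₀ for all x. Fix x₀ ∈ G, α > 0, let c₀ := inf_G V > 0 and p ≥ 1, and set ζ(x) := e^{-α d(x,x₀)}. Then Δζ(x) - p V(x) ζ(x) ≤ (C₀ α e^{αs} - p c₀) ζ(x) for all x ∈ G. -/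
theorem stmt10 {G : Type*} [Countable G]
    (ω : G → G → ℝ) (μ : G → ℝ) (d : G → G → ℝ)
    (hω_nonneg : ∀ x y, 0 ≤ ω x y)
    (hω_symm : ∀ x y, ω x y = ω y x)
    (hω_diag : ∀ x, ω x x = 0)
    (hω_sum : ∀ x, Summable fun y => ω x y)
    (hμ : ∀ x, 0 < μ x)
    (hd_self : ∀ x, d x x = 0)
    (hd_symm : ∀ x y, d x y = d y x)
    (hd_tri : ∀ x y z, d x y ≤ d x z + d z y)
    (s : ℝ) (hs : 0 ≤ s) (hjump : ∀ x y, 0 < ω x y → d x y ≤ s)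
    (C₀ : ℝ)
    (hdsum : ∀ x, Summable fun y => ω x y * d x y)
    (hintr1 : ∀ x, ∑' y, ω x y * d x y ≤ C₀ * μ x)
    (x₀ : G) (α : ℝ) (hα : 0 < α)
    (V : G → ℝ) (c₀ : ℝ) (hc₀ : 0 < c₀) (hV : ∀ x, c₀ ≤ V x)
    (p : ℝ) (hp : 1 ≤ p) :
    ∀ x : G,
      (μ x)⁻¹ * (∑' y, (Real.exp (-α * d y x₀) - Real.exp (-α * d x x₀)) * ω x y)
          - p * V x * Real.exp (-α * d x x₀)
        ≤ (C₀ * α * Real.exp (α * s) - p * c₀) * Real.exp (-α * d x x₀) := by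
  have hd_nonneg : ∀ x y, 0 ≤ d x y := by
    intro x y
    have := hd_tri x x y
    rw [hd_self, hd_symm y x] at this
    linarith
  intro x
  set ζx := Real.exp (-α * d x x₀) with hζx
  have hζx_pos : 0 < ζx := Real.exp_pos _
  have hζx_le1 : ζx ≤ 1 := by
    apply Real.exp_le_one_iff.2
    have := hd_nonneg x x₀
    nlinarith
  -- pointwise bound
  have key : ∀ y, (Real.exp (-α * d y x₀) - ζx) * ω x y
      ≤ α * Real.exp (α * s) * ζx * (ω x y * d x y) := by
    intro y
    rcases lt_or_eq_of_le (hω_nonneg x y) with hpos | heq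
    · have hds : d x y ≤ s := hjump x y hpos
      have hd1 : -α * d y x₀ ≤ -α * d x x₀ + α * d x y := by
        have := hd_tri x x₀ y
        have := hd_symm x₀ y
        nlinarith
      have h2 : Real.exp (-α * d y x₀) ≤ ζx * Real.exp (α * d x y) := by
        rw [hζx, ← Real.exp_add]
        exact Real.exp_le_exp.2 hd1
      have h3 : Real.exp (α * d x y) - 1 ≤ α * d x y * Real.exp (α * d x y) := by
        have := Real.add_one_le_exp (-(α * d x y))
        have hE : 0 < Real.exp (α * d x y) := Real.exp_pos _
        have : Real.exp (-(α * d x y)) * Real.exp (α * d x y) = 1 := by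
          rw [← Real.exp_add]; simp
        nlinarith
      have h4 : Real.exp (α * d x y) ≤ Real.exp (α * s) := by
        apply Real.exp_le_exp.2; nlinarith
      have hαd : 0 ≤ α * d x y := mul_nonneg hα.le (hd_nonneg x y)
      have h5 : Real.exp (-α * d y x₀) - ζx ≤ α * Real.exp (α * s) * ζx * d x y := by
        nlinarith [mul_le_mul_of_nonneg_left h3 hζx_pos.le,
          mul_le_mul_of_nonneg_left h4 (mul_nonneg hαd hζx_pos.le)]
      nlinarith
    · rw [← heq]; ring_nf; exact le_refl 0
  -- summability of lhs
  have hf_sum : Summable fun y => (Real.exp (-α * d y x₀) - ζx) * ω x y := by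
    apply Summable.of_abs
    apply Summable.of_nonneg_of_le (fun y => abs_nonneg _) _ (hω_sum x)
    intro y
    rw [abs_mul, abs_of_nonneg (hω_nonneg x y)]
    have h1 : 0 < Real.exp (-α * d y x₀) := Real.exp_pos _
    have h2 : Real.exp (-α * d y x₀) ≤ 1 := by
      apply Real.exp_le_one_iff.2
      have := hd_nonneg y x₀
      nlinarith
    have : |Real.exp (-α * d y x₀) - ζx| ≤ 1 := by
      rw [abs_le]; constructor <;> nlinarith
    nlinarith [hω_nonneg x y]
  have hg_sum : Summable fun y => α * Real.exp (α * s) * ζx * (ω x y * d x y) :=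
    (hdsum x).mul_left _
  have hts : (∑' y, (Real.exp (-α * d y x₀) - ζx) * ω x y)
      ≤ α * Real.exp (α * s) * ζx * ∑' y, ω x y * d x y := by
    rw [← tsum_mul_left]
    exact Summable.tsum_le_tsum key hf_sum hg_sum
  have hts2 : (∑' y, (Real.exp (-α * d y x₀) - ζx) * ω x y)
      ≤ α * Real.exp (α * s) * ζx * (C₀ * μ x) := by
    refine hts.trans ?_
    have hpos : 0 ≤ α * Real.exp (α * s) * ζx := by positivity
    exact mul_le_mul_of_nonneg_left (hintr1 x) hpos
  have hμx := hμ x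
  have hmain : (μ x)⁻¹ * (∑' y, (Real.exp (-α * d y x₀) - ζx) * ω x y)
      ≤ C₀ * α * Real.exp (α * s) * ζx := by
    rw [inv_mul_le_iff₀ hμx]
    calc (∑' y, (Real.exp (-α * d y x₀) - ζx) * ω x y)
        ≤ α * Real.exp (α * s) * ζx * (C₀ * μ x) := hts2
      _ = μ x * (C₀ * α * Real.exp (α * s) * ζx) := by ring
  have hVx : p * c₀ * ζx ≤ p * V x * ζx := by
    have hp0 : (0:ℝ) ≤ p := by linarith
    nlinarith [mul_nonneg (mul_nonneg hp0 hζx_pos.le) (sub_nonneg.2 (hV x))]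
  linarith [hmain, hVx]
end

section
/- Fix x₀ ∈ G, R > 0, 0 < δ < 1, and let d be a pseudo metric with jump size s. Define η(x) := min( (R - s - d(x₀,x))₊ / (δR), 1 ). Then |η(y) - η(x)| ≤ d(x,y)/(δR) · 𝟙_{{(1-δ)R - 2s ≤ d(x,x₀) ≤ R}} for all x, y ∈ G with ω(x,y) > 0. -/
theorem stmt11 {G : Type*} [Countable G]
    (ω : G → G → ℝ) (μ : G → ℝ) (d : G → G → ℝ)
    (hω_nonneg : ∀ x y, 0 ≤ ω x y)
    (hω_symm : ∀ x y, ω x y = ω y x)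
    (hω_diag : ∀ x, ω x x = 0)
    (hμ : ∀ x, 0 < μ x)
    (hd_self : ∀ x, d x x = 0)
    (hd_symm : ∀ x y, d x y = d y x)
    (hd_tri : ∀ x y z, d x y ≤ d x z + d z y)
    (s : ℝ) (hs : 0 ≤ s) (hjump : ∀ x y, 0 < ω x y → d x y ≤ s)
    (x₀ : G) (R δ : ℝ) (hR : 0 < R) (hδ : 0 < δ) (hδ1 : δ < 1)
    (η : G → ℝ) (hη : ∀ x, η x = min (max (R - s - d x₀ x) 0 / (δ * R)) 1) :
    ∀ x y : G, 0 < ω x y →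
      |η y - η x| ≤ d x y / (δ * R) *
        (if (1 - δ) * R - 2 * s ≤ d x x₀ ∧ d x x₀ ≤ R then 1 else 0) := by
  intro x y hxy
  have hdxy : d x y ≤ s := hjump x y hxy
  have hδR : 0 < δ * R := mul_pos hδ hR
  have hd0 : 0 ≤ d x y := by
    have h := hd_tri x x y
    rw [hd_self, hd_symm y x] at h
    linarith
  have htri1 : d x₀ y ≤ d x₀ x + d x y := hd_tri x₀ y x
  have htri2 : d x₀ x ≤ d x₀ y + d x y := by
    have := hd_tri x₀ x y
    rw [hd_symm y x] at this
    linarith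
  by_cases hcase : (1 - δ) * R - 2 * s ≤ d x x₀ ∧ d x x₀ ≤ R
  · rw [if_pos hcase, mul_one, hη x, hη y]
    have key : |max (R - s - d x₀ y) 0 / (δ * R) - max (R - s - d x₀ x) 0 / (δ * R)|
        ≤ d x y / (δ * R) := by
      rw [div_sub_div_same, abs_div, abs_of_pos hδR]
      gcongr
      calc |max (R - s - d x₀ y) 0 - max (R - s - d x₀ x) 0|
          ≤ |(R - s - d x₀ y) - (R - s - d x₀ x)| := abs_max_sub_max_le_abs _ _ _
        _ ≤ d x y := by
            rw [abs_le]
            constructor <;> linarith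
    calc |min (max (R - s - d x₀ y) 0 / (δ * R)) 1 - min (max (R - s - d x₀ x) 0 / (δ * R)) 1|
        ≤ |max (R - s - d x₀ y) 0 / (δ * R) - max (R - s - d x₀ x) 0 / (δ * R)| := by
          refine (abs_min_sub_min_le_max _ _ _ _).trans ?_
          simp only [sub_self, abs_zero, max_le_iff]
          exact ⟨le_refl _, abs_nonneg _⟩
      _ ≤ d x y / (δ * R) := key
  · simp only [hcase, if_false, mul_zero]
    have hxx₀ : d x₀ x = d x x₀ := hd_symm x₀ x
    rcases not_and_or.mp hcase with h | h
    · push_neg at h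
      -- d x x₀ < (1-δ)R - 2s, so η x = η y = 1
      have hx1 : η x = 1 := by
        rw [hη x, min_eq_right]
        rw [le_div_iff₀ hδR, one_mul]
        refine le_max_of_le_left ?_
        linarith [hxx₀]
      have hy1 : η y = 1 := by
        rw [hη y, min_eq_right]
        rw [le_div_iff₀ hδR, one_mul]
        refine le_max_of_le_left ?_
        linarith [hxx₀]
      simp [hx1, hy1]
    · push_neg at h
      -- R < d x x₀, so η x = η y = 0
      have hx0 : η x = 0 := by
        rw [hη x, min_eq_left, max_eq_right, zero_div]
        · linarith [hxx₀]
        · rw [max_eq_right (by linarith [hxx₀]), zero_div]; norm_num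
      have hy0 : η y = 0 := by
        rw [hη y, min_eq_left, max_eq_right, zero_div]
        · linarith
        · rw [max_eq_right (by linarith), zero_div]; norm_num
      simp [hx0, hy0]
end

section
/- With η as defined in the previous statement, if d is 2-intrinsic with bound 1 (i.e. (1/μ(x)) ∑_y ω(x,y) d²(x,y) ≤ 1 for all x), then ∑_{y∈G} (η(y) - η(x))² ω(x,y) ≤ μ(x)/(δ²R²) · 𝟙_{{(1-δ)R - 2s ≤ d(x,x₀) ≤ R}} for all x ∈ G. -/
lemma eta_lip (a b c : ℝ) (hc : 0 < c) :
    |min (max a 0 / c) 1 - min (max b 0 / c) 1| ≤ |a - b| / c := by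
  have h1 : |min (max a 0 / c) 1 - min (max b 0 / c) 1| ≤
      max |max a 0 / c - max b 0 / c| |(1:ℝ) - 1| := abs_min_sub_min_le_max _ _ _ _
  have h2 : |max a 0 / c - max b 0 / c| = |max a 0 - max b 0| / c := by
    rw [div_sub_div_same, abs_div, abs_of_pos hc]
  have h3 : |max a 0 - max b 0| ≤ |a - b| := abs_max_sub_max_le_abs _ _ _
  calc |min (max a 0 / c) 1 - min (max b 0 / c) 1|
      ≤ max |max a 0 / c - max b 0 / c| |(1:ℝ) - 1| := h1
    _ = |max a 0 - max b 0| / c := by rw [h2]; simp; positivity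
    _ ≤ |a - b| / c := by
        apply div_le_div_of_nonneg_right h3 hc.le

theorem stmt12 {G : Type*} [Countable G]
    (ω : G → G → ℝ) (μ : G → ℝ) (d : G → G → ℝ)
    (hω_nonneg : ∀ x y, 0 ≤ ω x y)
    (hω_symm : ∀ x y, ω x y = ω y x)
    (hω_diag : ∀ x, ω x x = 0)
    (hμ : ∀ x, 0 < μ x)
    (hd_self : ∀ x, d x x = 0)
    (hd_symm : ∀ x y, d x y = d y x)
    (hd_tri : ∀ x y z, d x y ≤ d x z + d z y)
    (s : ℝ) (hs : 0 ≤ s) (hjump : ∀ x y, 0 < ω x y → d x y ≤ s)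
    (hwsum : ∀ x, Summable fun y => ω x y * (d x y)^2)
    (hintr : ∀ x, ∑' y, ω x y * (d x y)^2 ≤ μ x)
    (x₀ : G) (R δ : ℝ) (hR : 0 < R) (hδ : 0 < δ) (hδ1 : δ < 1)
    (η : G → ℝ) (hη : ∀ x, η x = min (max (R - s - d x₀ x) 0 / (δ * R)) 1) :
    ∀ x : G,
      ∑' y, (η y - η x)^2 * ω x y ≤
        μ x / (δ^2 * R^2) *
          (if (1 - δ) * R - 2 * s ≤ d x x₀ ∧ d x x₀ ≤ R then 1 else 0) := by
  intro x
  have hc : 0 < δ * R := mul_pos hδ hR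
  by_cases hind : (1 - δ) * R - 2 * s ≤ d x x₀ ∧ d x x₀ ≤ R
  · rw [if_pos hind, mul_one]
    -- pointwise bound
    have key : ∀ y, (η y - η x)^2 * ω x y ≤ 1 / (δ * R)^2 * (ω x y * (d x y)^2) := by
      intro y
      rcases eq_or_lt_of_le (hω_nonneg x y) with h | h
      · rw [← h]; simp
      · have hd : d x y ≤ s := hjump x y h
        have habs : |η y - η x| ≤ d x y / (δ * R) := by
          rw [hη y, hη x]
          refine (eta_lip _ _ _ hc).trans ?_
          gcongr
          have t1 : d x₀ y ≤ d x₀ x + d x y := hd_tri x₀ y x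
          have t2 : d x₀ x ≤ d x₀ y + d x y := by
            have := hd_tri x₀ x y
            rw [hd_symm y x] at this
            linarith
          rw [abs_le]
          constructor <;> [linarith; linarith]
        have hsq : (η y - η x)^2 ≤ (d x y / (δ * R))^2 := by
          have := abs_nonneg (η y - η x)
          calc (η y - η x)^2 = |η y - η x|^2 := (sq_abs _).symm
            _ ≤ (d x y / (δ * R))^2 := by
                apply pow_le_pow_left₀ (abs_nonneg _) habs
        calc (η y - η x)^2 * ω x y ≤ (d x y / (δ * R))^2 * ω x y := by
              exact mul_le_mul_of_nonneg_right hsq (hω_nonneg x y)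
          _ = 1 / (δ * R)^2 * (ω x y * (d x y)^2) := by
              rw [div_pow]; ring
    have hnn : ∀ y, 0 ≤ (η y - η x)^2 * ω x y := fun y =>
      mul_nonneg (sq_nonneg _) (hω_nonneg x y)
    have hsum2 : Summable fun y => 1 / (δ * R)^2 * (ω x y * (d x y)^2) :=
      (hwsum x).mul_left _
    have hsum1 : Summable fun y => (η y - η x)^2 * ω x y :=
      Summable.of_nonneg_of_le hnn key hsum2
    calc ∑' y, (η y - η x)^2 * ω x y
        ≤ ∑' y, 1 / (δ * R)^2 * (ω x y * (d x y)^2) :=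
          Summable.tsum_le_tsum key hsum1 hsum2
      _ = 1 / (δ * R)^2 * ∑' y, ω x y * (d x y)^2 := tsum_mul_left
      _ ≤ 1 / (δ * R)^2 * μ x := by
          apply mul_le_mul_of_nonneg_left (hintr x)
          positivity
      _ = μ x / (δ^2 * R^2) := by rw [mul_pow]; ring
  · rw [if_neg hind, mul_zero]
    have hzero : ∀ y, (η y - η x)^2 * ω x y = 0 := by
      intro y
      rcases eq_or_lt_of_le (hω_nonneg x y) with h | h
      · rw [← h, mul_zero]
      · have hd : d x y ≤ s := hjump x y h
        have hdnn : 0 ≤ d x y := by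
          have := hd_tri x x y
          rw [hd_self x, hd_symm y x] at this
          linarith
        rcases not_and_or.mp hind with h1 | h2
        · push_neg at h1
          -- d x x₀ < (1-δ)R - 2s : η x = η y = 1
          have ex : η x = 1 := by
            rw [hη x, min_eq_right]
            rw [le_div_iff₀ hc, one_mul]
            have : d x₀ x = d x x₀ := hd_symm x₀ x
            rw [max_eq_left (by linarith)]
            linarith
          have ey : η y = 1 := by
            rw [hη y, min_eq_right]
            rw [le_div_iff₀ hc, one_mul]
            have t1 : d x₀ y ≤ d x₀ x + d x y := hd_tri x₀ y x
            have : d x₀ x = d x x₀ := hd_symm x₀ x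
            rw [max_eq_left (by linarith)]
            linarith
          rw [ex, ey]; ring
        · push_neg at h2
          -- d x x₀ > R : η x = η y = 0
          have hxx : d x₀ x = d x x₀ := hd_symm x₀ x
          have ex : η x = 0 := by
            rw [hη x, max_eq_right (by linarith), zero_div, min_eq_left zero_le_one]
          have ey : η y = 0 := by
            have t2 : d x₀ x ≤ d x₀ y + d x y := by
              have := hd_tri x₀ x y
              rw [hd_symm y x] at this
              linarith
            rw [hη y, max_eq_right (by linarith), zero_div, min_eq_left zero_le_one]
          rw [ex, ey]; ring
    rw [tsum_congr hzero]
    simp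
end

section
/- Let (G, ω, μ) be an infinite, connected, locally finite weighted graph, V : G → ℝ, u a solution of Δu - Vu = 0 on G, p ≥ 1, and v : G → ℝ a nonnegative finitely supported function. Then ∑_{x∈G} |u(x)|^p ( -Δv(x) + p V(x) v(x) ) μ(x) ≤ 0. -/
lemma conv_aux {p : ℝ} (hp : 1 ≤ p) (s t : ℝ) :
    p * |s| ^ p / s * (t - s) ≤ |t| ^ p - |s| ^ p := by
  have hp0 : (0:ℝ) < p := by linarith
  rcases eq_or_ne s 0 with rfl | hs
  · simp [abs_zero, Real.zero_rpow hp0.ne']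
    positivity
  · set a := |s| with ha
    set b := |t| with hb
    have ha0 : 0 < a := abs_pos.2 hs
    have hb0 : 0 ≤ b := abs_nonneg t
    have hA1 : (0:ℝ) ≤ a ^ (p - 1) := Real.rpow_nonneg ha0.le _
    have harp : a ^ p / a = a ^ (p - 1) := by
      rw [Real.rpow_sub ha0, Real.rpow_one]
    -- Bernoulli
    have hber := one_add_mul_self_le_rpow_one_add
      (s := b / a - 1) (by linarith [div_nonneg hb0 ha0.le]) hp
    have hdiv : (1 + (b / a - 1)) ^ p = b ^ p / a ^ p := by
      rw [show 1 + (b / a - 1) = b / a by ring, Real.div_rpow hb0 ha0.le]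
    rw [hdiv] at hber
    have hap : (0:ℝ) < a ^ p := Real.rpow_pos_of_pos ha0 p
    -- key1 : a^p + p * a^(p-1) * (b - a) ≤ b^p
    have key1 : a ^ p + p * a ^ (p - 1) * (b - a) ≤ b ^ p := by
      have h1 : a ^ p * (1 + p * (b / a - 1)) ≤ a ^ p * (b ^ p / a ^ p) :=
        mul_le_mul_of_nonneg_left hber hap.le
      have h2 : a ^ p * (b ^ p / a ^ p) = b ^ p := by field_simp
      have h3 : a ^ p * (b / a - 1) = a ^ (p - 1) * (b - a) := by
        rw [← harp]; field_simp
      nlinarith [h1, h2, h3]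
    -- key2 : LHS ≤ p * a^(p-1) * (b - a)
    have key2 : p * |s| ^ p / s * (t - s) ≤ p * a ^ (p - 1) * (b - a) := by
      rcases hs.lt_or_gt with hneg | hpos
      · have has : a = -s := abs_of_neg hneg
        have : p * |s| ^ p / s * (t - s) = p * a ^ (p - 1) * (s - t) := by
          rw [← ha, ← harp, has]
          field_simp [hs]
          ring
        rw [this]
        have hst : s - t ≤ b - a := by
          have := neg_le_abs t
          rw [has]; linarith [this]
        exact mul_le_mul_of_nonneg_left hst (by positivity)
      · have has : a = s := abs_of_pos hpos
        have : p * |s| ^ p / s * (t - s) = p * a ^ (p - 1) * (t - s) := by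
          rw [← ha, ← harp, has]; field_simp [hs]
        rw [this]
        have hst : t - s ≤ b - a := by
          have := le_abs_self t
          rw [has]; linarith [this]
        exact mul_le_mul_of_nonneg_left hst (by positivity)
    linarith



/-- Proposition 4.4: a priori estimate with a nonnegative finitely supported
test function `v`. -/
theorem stmt14 {G : Type*} [Countable G] [Infinite G]
    (ω : G → G → ℝ) (μ : G → ℝ)
    (hω_nonneg : ∀ x y, 0 ≤ ω x y)
    (hω_symm : ∀ x y, ω x y = ω y x)
    (hω_diag : ∀ x, ω x x = 0)
    (hloc : ∀ x, {y | ω x y ≠ 0}.Finite)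
    (hconn : ∀ x y : G, Relation.ReflTransGen (fun a b => 0 < ω a b) x y)
    (hμ : ∀ x, 0 < μ x)
    (V : G → ℝ) (u : G → ℝ)
    (hu_sum : ∀ x, Summable fun y => (u y - u x) * ω x y)
    (hu : ∀ x, (μ x)⁻¹ * (∑' y, (u y - u x) * ω x y) - V x * u x = 0)
    (p : ℝ) (hp : 1 ≤ p)
    (v : G → ℝ) (hv_nonneg : ∀ x, 0 ≤ v x)
    (hv_supp : (Function.support v).Finite) :
    ∑' x, |u x| ^ p *
        (-((μ x)⁻¹ * ∑' y, (v y - v x) * ω x y) + p * V x * v x) * μ x ≤ 0 := by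
  classical
  have hp0 : (0:ℝ) < p := by linarith
  set f : G → ℝ := fun x => |u x| ^ p with hfdef
  set ψ : G → ℝ := fun x => p * |u x| ^ p / u x with hψdef
  set A : Finset G := hv_supp.toFinset with hAdef
  set F : Finset G := A ∪ A.biUnion (fun y => (hloc y).toFinset) with hFdef
  set T : Finset G := F ∪ F.biUnion (fun x => (hloc x).toFinset) with hTdef
  have hFT : F ⊆ T := Finset.subset_union_left
  have hvA : ∀ x, x ∉ A → v x = 0 := by
    intro x hx
    by_contra h
    exact hx (by simp [hAdef, Set.Finite.mem_toFinset, Function.mem_support, h])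
  -- if x ∉ F then every term of the Laplacian of v at x vanishes
  have hzero : ∀ x, x ∉ F → ∀ y, (v y - v x) * ω x y = 0 := by
    intro x hx y
    have hvx : v x = 0 := hvA x (fun h => hx (Finset.mem_union_left _ h))
    rcases eq_or_ne (v y) 0 with hvy | hvy
    · simp [hvx, hvy]
    · have hyA : y ∈ A := by
        simp [hAdef, Set.Finite.mem_toFinset, Function.mem_support, hvy]
      have hωyx : ω y x = 0 := by
        by_contra h
        exact hx (Finset.mem_union_right _
          (Finset.mem_biUnion.2 ⟨y, hyA, by simp [Set.Finite.mem_toFinset, h]⟩))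
      rw [hω_symm x y, hωyx, mul_zero]
  -- for x ∈ F, all neighbors of x are in T
  have hnbr : ∀ x ∈ F, ∀ y, y ∉ T → ω x y = 0 := by
    intro x hx y hy
    by_contra h
    exact hy (Finset.mem_union_right _
      (Finset.mem_biUnion.2 ⟨x, hx, by simp [Set.Finite.mem_toFinset, h]⟩))
  -- the Laplacian sums as finite sums
  have lapv : ∀ x ∈ F, (∑' y, (v y - v x) * ω x y) = ∑ y ∈ T, (v y - v x) * ω x y := by
    intro x hx
    exact tsum_eq_sum (fun y hy => by rw [hnbr x hx y hy, mul_zero])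
  have lapu : ∀ x ∈ F, (∑' y, (u y - u x) * ω x y) = ∑ y ∈ T, (u y - u x) * ω x y := by
    intro x hx
    exact tsum_eq_sum (fun y hy => by rw [hnbr x hx y hy, mul_zero])
  have huS : ∀ x, (∑' y, (u y - u x) * ω x y) = μ x * (V x * u x) := by
    intro x
    have := hu x
    have hμx := (hμ x).ne'
    field_simp at this
    linarith [this]
  -- the summand
  set g : G → ℝ := fun x => |u x| ^ p *
      (-((μ x)⁻¹ * ∑' y, (v y - v x) * ω x y) + p * V x * v x) * μ x with hgdef
  have hg0 : ∀ x, x ∉ F → g x = 0 := by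
    intro x hx
    have h1 : (∑' y, (v y - v x) * ω x y) = 0 := by
      rw [show (fun y => (v y - v x) * ω x y) = fun _ => (0:ℝ) from
        funext (fun y => hzero x hx y)]
      exact tsum_zero
    have hvx : v x = 0 := hvA x (fun h => hx (Finset.mem_union_left _ h))
    simp only [hgdef]
    rw [h1, hvx]
    ring
  have htsum : (∑' x, g x) = ∑ x ∈ F, g x := tsum_eq_sum hg0
  -- rewrite g on F
  have hgF : ∀ x ∈ F, g x = p * f x * V x * v x * μ x
      - f x * ∑ y ∈ T, (v y - v x) * ω x y := by
    intro x hx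
    have hμx := (hμ x).ne'
    rw [hgdef]
    simp only []
    rw [lapv x hx]
    field_simp
    ring
  -- the double sum
  have hD1 : ∑ x ∈ F, f x * ∑ y ∈ T, (v y - v x) * ω x y
      = ∑ x ∈ T, f x * ∑ y ∈ T, (v y - v x) * ω x y := by
    refine Finset.sum_subset hFT (fun x _ hx => ?_)
    rw [show (∑ y ∈ T, (v y - v x) * ω x y) = 0 from
      Finset.sum_eq_zero (fun y _ => hzero x hx y), mul_zero]
  -- Green's identity (swap)
  have hswap : ∑ x ∈ T, ∑ y ∈ T, f x * ((v y - v x) * ω x y)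
      = ∑ x ∈ T, ∑ y ∈ T, v x * ((f y - f x) * ω x y) := by
    have h1 : ∑ x ∈ T, ∑ y ∈ T, f x * v y * ω x y
        = ∑ x ∈ T, ∑ y ∈ T, v x * f y * ω x y := by
      rw [Finset.sum_comm]
      exact Finset.sum_congr rfl (fun x _ => Finset.sum_congr rfl
        (fun y _ => by rw [hω_symm y x]; ring)
      )
    calc ∑ x ∈ T, ∑ y ∈ T, f x * ((v y - v x) * ω x y)
        = ∑ x ∈ T, ∑ y ∈ T, (f x * v y * ω x y - f x * v x * ω x y) := by
          exact Finset.sum_congr rfl (fun x _ => Finset.sum_congr rfl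
            (fun y _ => by ring))
      _ = (∑ x ∈ T, ∑ y ∈ T, f x * v y * ω x y)
          - ∑ x ∈ T, ∑ y ∈ T, f x * v x * ω x y := by
          simp [Finset.sum_sub_distrib]
      _ = (∑ x ∈ T, ∑ y ∈ T, v x * f y * ω x y)
          - ∑ x ∈ T, ∑ y ∈ T, f x * v x * ω x y := by rw [h1]
      _ = ∑ x ∈ T, ∑ y ∈ T, v x * ((f y - f x) * ω x y) := by
          rw [← Finset.sum_sub_distrib]
          exact Finset.sum_congr rfl (fun x _ => by
            rw [← Finset.sum_sub_distrib]
            exact Finset.sum_congr rfl (fun y _ => by ring))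
  -- convexity lower bound
  have hconv : ∀ x y : G, v x * ((ψ x * (u y - u x)) * ω x y)
      ≤ v x * ((f y - f x) * ω x y) := by
    intro x y
    have h1 : ψ x * (u y - u x) ≤ f y - f x := conv_aux hp (u x) (u y)
    have h2 : 0 ≤ v x * ω x y := mul_nonneg (hv_nonneg x) (hω_nonneg x y)
    nlinarith [mul_le_mul_of_nonneg_left h1 h2]
  have hE : ∑ x ∈ T, ∑ y ∈ T, v x * ((ψ x * (u y - u x)) * ω x y)
      ≤ ∑ x ∈ T, ∑ y ∈ T, v x * ((f y - f x) * ω x y) :=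
    Finset.sum_le_sum (fun x _ => Finset.sum_le_sum (fun y _ => hconv x y))
  -- compute E
  have hEeq : ∑ x ∈ T, ∑ y ∈ T, v x * ((ψ x * (u y - u x)) * ω x y)
      = ∑ x ∈ T, p * f x * V x * v x * μ x := by
    refine Finset.sum_congr rfl (fun x _ => ?_)
    rcases eq_or_ne (v x) 0 with hvx | hvx
    · simp [hvx]
    · have hxA : x ∈ A := by
        simp [hAdef, Set.Finite.mem_toFinset, Function.mem_support, hvx]
      have hxF : x ∈ F := Finset.mem_union_left _ hxA
      have h1 : ∑ y ∈ T, v x * ((ψ x * (u y - u x)) * ω x y)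
          = v x * ψ x * ∑ y ∈ T, (u y - u x) * ω x y := by
        rw [Finset.mul_sum]
        exact Finset.sum_congr rfl (fun y _ => by ring)
      rw [h1, ← lapu x hxF, huS x]
      rcases eq_or_ne (u x) 0 with hux | hux
      · have : f x = 0 := by simp [hfdef, hux, Real.zero_rpow hp0.ne']
        rw [hux, this]; ring
      · rw [hψdef, hfdef]
        simp only []
        field_simp
  -- sum of the potential term over T equals over F
  have hPT : ∑ x ∈ T, p * f x * V x * v x * μ x
      = ∑ x ∈ F, p * f x * V x * v x * μ x := by
    symm
    refine Finset.sum_subset hFT (fun x _ hx => ?_)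
    rw [hvA x (fun h => hx (Finset.mem_union_left _ h))]
    ring
  -- put everything together
  have hFsplit : ∑ x ∈ F, g x = (∑ x ∈ F, p * f x * V x * v x * μ x)
      - ∑ x ∈ T, ∑ y ∈ T, f x * ((v y - v x) * ω x y) := by
    rw [Finset.sum_congr rfl hgF, Finset.sum_sub_distrib]
    congr 1
    rw [hD1]
    exact Finset.sum_congr rfl (fun x _ => by rw [Finset.mul_sum])
  rw [htsum, hFsplit, ← hPT]
  have : ∑ x ∈ T, p * f x * V x * v x * μ x
      ≤ ∑ x ∈ T, ∑ y ∈ T, f x * ((v y - v x) * ω x y) := by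
    rw [hswap, ← hEeq]
    exact hE
  linarith
end

section
/- Let (G, ω, μ) be an infinite, connected, locally finite weighted graph, V : G → ℝ, u a solution of Δu - Vu = 0, p ≥ 2, and let η, ξ : G → ℝ with η ≥ 0 finitely supported and (η²(y)-η²(x))(e^{ξ(y)}-e^{ξ(x)}) ≥ 0 for all x ~ y. Then (1/2) ∑_{x∈G} |u(x)|^p η²(x) e^{ξ(x)} ( pV(x)μ(x) - (1/2) ∑_{y∈G} ω(x,y)(1 - e^{ξ(y)-ξ(x)})² ) ≤ ∑_{x,y∈G} |u(x)|^p e^{ξ(y)} (η(y)-η(x))² ω(x,y). -/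
set_option maxHeartbeats 1000000


lemma W3aux (α β E F : ℝ) (hα : 0 ≤ α) (hβ : 0 ≤ β) (hab : α ≤ β) (hE : 0 < E) (hF : 0 < F) :
    4*E*F*(α^2*E+β^2*F)^2 ≤ α^2*β^2*(E+F)^4 + 16*E*F*(β-α)^2*(α^2*E^2+β^2*F^2)
      + 16*E^2*F^2*(β-α)^4 := by
  have hδ : 0 ≤ β - α := by linarith
  have hσ : 0 ≤ α + β := by linarith
  have hσδ : 0 ≤ (α+β) * (β-α) := mul_nonneg hσ hδ
  have he : (0:ℝ) < E * F := mul_pos hE hF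
  rcases le_or_gt E F with hG | hG
  · -- G ≤ 0
    have h1 : 0 ≤ -(2*(α+β)*(β-α)*(E-F)) := by nlinarith
    have h2 : 0 ≤ 6*(β-α)^2*(E+F) - 2*(α+β)*(β-α)*(E-F) := by nlinarith [sq_nonneg (β-α)]
    nlinarith [sq_nonneg (α*β*(E+F)*(E-F) + 2*(E*F)*(α+β)*(β-α)),
      mul_nonneg he.le (mul_nonneg h1 h2),
      mul_nonneg (mul_nonneg he.le (sq_nonneg ((β-α)^2))) (sq_nonneg (E+F)),
      mul_nonneg (mul_nonneg he.le he.le) (sq_nonneg ((β-α)^2))]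
  · -- G > 0
    have hPG : 0 ≤ (E-F)^2 + 2*(E*F) - (E+F)*(E-F) := by nlinarith [sq_nonneg (2*F)]
    rcases le_or_gt ((α+β)^2) (7*(β-α)^2) with hc | hc
    · have h1 : 0 ≤ (α+β)*(β-α)*(7*(β-α)^2 - (α+β)^2) := by nlinarith
      have h3 : 0 ≤ (β-α)*((α+β)-(β-α))^2*((α+β)+4*(β-α)) := by positivity
      nlinarith [sq_nonneg (α*β*(E+F)*(E-F)),
        mul_nonneg he.le (mul_nonneg h1 hPG),
        mul_nonneg (mul_nonneg he.le (sq_nonneg (E-F))) h3,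
        mul_nonneg (mul_nonneg (mul_nonneg he.le he.le) hδ) h3,
        mul_nonneg (mul_nonneg (mul_nonneg he.le he.le) (mul_nonneg hδ hδ)) (mul_nonneg hδ hδ)]
    · have h1 : 0 ≤ (α+β)*(β-α)*((α+β)^2 - 7*(β-α)^2) := by nlinarith
      have h2 : 0 ≤ (E+F)*(E-F) := by nlinarith
      nlinarith [sq_nonneg (α*β*(E+F)*(E-F)),
        mul_nonneg (mul_nonneg he.le h1) h2,
        mul_nonneg (mul_nonneg he.le he.le) (mul_nonneg (mul_nonneg hσ hσ) (mul_nonneg hδ hδ)),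
        mul_nonneg (mul_nonneg he.le (mul_nonneg (mul_nonneg hσ hσ) (mul_nonneg hδ hδ))) (sq_nonneg (E-F)),
        mul_nonneg (mul_nonneg he.le (mul_nonneg (mul_nonneg hδ hδ) (mul_nonneg hδ hδ))) (sq_nonneg (E-F)),
        mul_nonneg (mul_nonneg (mul_nonneg he.le he.le) (mul_nonneg hδ hδ)) (mul_nonneg hδ hδ)]

lemma W3 (α β E F : ℝ) (hα : 0 ≤ α) (hβ : 0 ≤ β) (hE : 0 < E) (hF : 0 < F) :
    4*E*F*(α^2*E+β^2*F)^2 ≤ α^2*β^2*(E+F)^4 + 16*E*F*(β-α)^2*(α^2*E^2+β^2*F^2)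
      + 16*E^2*F^2*(β-α)^4 := by
  rcases le_total α β with h | h
  · exact W3aux α β E F hα hβ h hE hF
  · have := W3aux β α F E hβ hα h hF hE
    nlinarith [this]


lemma kato_aux (p A B : ℝ) (hp : 2 ≤ p) (hA : 0 < A) (hB : 0 < B) :
    p * (A ^ (p-2) * (A * B)) ≤ (p-2) * (A^(p-2) * (A*A)) + 2 * (A^(p/2) * B^(p/2)) := by
  have hyA : A ^ (p/2) * A ^ (p/2) = A ^ (p-2) * (A*A) := by
    rw [← Real.rpow_add hA]
    have h2' : A * A = A ^ (2:ℝ) := by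
      rw [show (2:ℝ) = ((2:ℕ):ℝ) by norm_num, Real.rpow_natCast]; ring
    rw [h2', ← Real.rpow_add hA]
    norm_num
  have hy0 : 0 < A ^ (p/2) := Real.rpow_pos_of_pos hA _
  have hbern := one_add_mul_self_le_rpow_one_add (s := B/A - 1)
    (by have := div_pos hB hA; linarith) (by linarith : 1 ≤ p/2)
  rw [show (1 : ℝ) + (B/A - 1) = B/A by ring] at hbern
  rw [Real.div_rpow hB.le hA.le] at hbern
  have hbern2 : A ^ (p/2) * A + (p/2) * (B - A) * A ^ (p/2) ≤ B ^ (p/2) * A := by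
    have h1 : (1 + p/2 * (B/A - 1)) * (A ^ (p/2) * A) ≤ (B ^ (p/2) / A ^ (p/2)) * (A ^ (p/2) * A) :=
      mul_le_mul_of_nonneg_right hbern (by positivity)
    have e1 : (1 + p/2 * (B/A - 1)) * (A ^ (p/2) * A) = A ^ (p/2) * A + (p/2) * (B - A) * A ^ (p/2) := by
      field_simp
    have e2 : (B ^ (p/2) / A ^ (p/2)) * (A ^ (p/2) * A) = B ^ (p/2) * A := by
      field_simp
    rw [e1, e2] at h1; exact h1
  have h4 := mul_le_mul_of_nonneg_left hbern2 (by positivity : (0:ℝ) ≤ 2 * A^(p/2))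
  have h5 : 2*(A^(p/2)*A^(p/2))*A + p*(B-A)*(A^(p/2)*A^(p/2)) ≤ 2*(A^(p/2)*B^(p/2))*A := by
    nlinarith [h4]
  rw [hyA] at h5
  apply le_of_mul_le_mul_right _ hA
  nlinarith [h5]

lemma kato (p : ℝ) (hp : 2 ≤ p) (a b : ℝ) :
    p * (|a| ^ (p-2) * a) * (b - a) ≤ 2 * |a| ^ (p/2) * (|b| ^ (p/2) - |a| ^ (p/2)) := by
  rcases eq_or_ne a 0 with rfl | ha
  · simp [Real.zero_rpow (by positivity : p/2 ≠ 0)]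
  · have hA : (0:ℝ) < |a| := abs_pos.mpr ha
    have hyA : |a| ^ (p/2) * |a| ^ (p/2) = |a| ^ (p-2) * (|a| * |a|) := by
      rw [← Real.rpow_add hA]
      have h2' : |a| * |a| = |a| ^ (2:ℝ) := by
        rw [show (2:ℝ) = ((2:ℕ):ℝ) by norm_num, Real.rpow_natCast]; ring
      rw [h2', ← Real.rpow_add hA]
      norm_num
    have hy0 : 0 < |a| ^ (p/2) := Real.rpow_pos_of_pos hA _
    have hx0 : 0 < |a| ^ (p-2) := Real.rpow_pos_of_pos hA _
    have haa : a * a = |a| * |a| := (abs_mul_abs_self a).symm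
    rcases eq_or_ne b 0 with rfl | hb
    · have h0 : |(0:ℝ)| ^ (p/2) = 0 := by simp [Real.zero_rpow (by positivity : p/2 ≠ 0)]
      rw [h0]
      have heq : p * (|a| ^ (p-2) * a) * (0 - a) = -(p * (|a|^(p-2) * (a*a))) := by ring
      rw [heq, haa]
      nlinarith [hy0, hx0, mul_pos hx0 (mul_pos hA hA)]
    · have hB : (0:ℝ) < |b| := abs_pos.mpr hb
      have key := kato_aux p |a| |b| hp hA hB
      have habs : a * (b - a) ≤ |a| * |b| - |a| * |a| := by
        have h1 : a * b ≤ |a| * |b| := by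
          calc a * b ≤ |a * b| := le_abs_self _
            _ = |a| * |b| := abs_mul a b
        nlinarith [haa]
      have hmono := mul_le_mul_of_nonneg_left habs
        (mul_nonneg (by linarith : (0:ℝ) ≤ p) hx0.le)
      nlinarith [key, hmono, hyA]


lemma amgm (P Q K c d : ℝ) (hP : 0 ≤ P) (hQ : 0 ≤ Q) (hK : 0 ≤ K) (hc : 0 ≤ c) (hd : 0 ≤ d)
    (h : K^2 ≤ 4*(P*Q)) : c*d*K ≤ c^2*P + d^2*Q := by
  have hsP : Real.sqrt P ^2 = P := Real.sq_sqrt hP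
  have hsQ : Real.sqrt Q ^2 = Q := Real.sq_sqrt hQ
  have hsPn : 0 ≤ Real.sqrt P := Real.sqrt_nonneg _
  have hsQn : 0 ≤ Real.sqrt Q := Real.sqrt_nonneg _
  have hKle : K ≤ 2*(Real.sqrt P * Real.sqrt Q) := by
    have e1 : K = Real.sqrt (K^2) := (Real.sqrt_sq hK).symm
    have e2 : Real.sqrt (K^2) ≤ Real.sqrt (4*(P*Q)) := Real.sqrt_le_sqrt h
    have e3 : Real.sqrt (4*(P*Q)) = 2*(Real.sqrt P * Real.sqrt Q) := by
      rw [show (4:ℝ)*(P*Q) = (2:ℝ)^2*(P*Q) by norm_num, Real.sqrt_mul (by positivity),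
        Real.sqrt_sq (by norm_num : (0:ℝ) ≤ 2), Real.sqrt_mul hP]
    rw [e3] at e2; linarith [e1 ▸ e2]
  have h5 := mul_le_mul_of_nonneg_left hKle (mul_nonneg hc hd)
  nlinarith [sq_nonneg (c*Real.sqrt P - d*Real.sqrt Q), hsP, hsQ, h5]

lemma dag2 (c d α β E F : ℝ) (hc : 0 ≤ c) (hd : 0 ≤ d) (hα : 0 ≤ α) (hβ : 0 ≤ β)
    (hE : 0 < E) (hF : 0 < F) :
    4*E*F*(-(d-c)*(d*β^2*F - c*α^2*E)) ≤
      4*E*F*((c^2*F + d^2*E)*(β-α)^2) + F*(c^2*α^2)*(E-F)^2 + E*(d^2*β^2)*(E-F)^2 := by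
  have hw3 := W3 α β E F hα hβ hE hF
  have hKPQ : (4*E*F*(α^2*E+β^2*F))^2 ≤
      4*((F*(α^2*(4*E^2+(E-F)^2) + 4*E*F*(β-α)^2)) * (E*(β^2*(4*F^2+(E-F)^2) + 4*E*F*(β-α)^2))) := by
    have h1 : 0 ≤ 4*E*F*((α^2*β^2*(E+F)^4 + 16*E*F*(β-α)^2*(α^2*E^2+β^2*F^2)
        + 16*E^2*F^2*(β-α)^4) - 4*E*F*(α^2*E+β^2*F)^2) :=
      mul_nonneg (by positivity) (sub_nonneg.2 hw3)
    have h2 : 0 ≤ 16*E*F*(α^2*β^2)*(E-F)^4 := by positivity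
    have h3 : 0 ≤ 16*E^2*F^2*((β-α)^2*((α^2+β^2)*(E-F)^2)) := by positivity
    nlinarith [h1, h2, h3]
  have key := amgm _ _ _ c d (by positivity) (by positivity) (by positivity) hc hd hKPQ
  nlinarith [key]

lemma dag (c d α β s t : ℝ) (hc : 0 ≤ c) (hd : 0 ≤ d) (hα : 0 ≤ α) (hβ : 0 ≤ β) :
    -(d-c)*(d*β^2*Real.exp t - c*α^2*Real.exp s) ≤
      (c^2*Real.exp t + d^2*Real.exp s)*(β-α)^2
      + (1/4)*(c^2*α^2*Real.exp s)*(1-Real.exp (t-s))^2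
      + (1/4)*(d^2*β^2*Real.exp t)*(1-Real.exp (s-t))^2 := by
  have hE : (0:ℝ) < Real.exp s := Real.exp_pos s
  have hF : (0:ℝ) < Real.exp t := Real.exp_pos t
  have h := dag2 c d α β (Real.exp s) (Real.exp t) hc hd hα hβ hE hF
  rw [Real.exp_sub, Real.exp_sub, ← sub_nonneg]
  have hid : (c^2*Real.exp t + d^2*Real.exp s)*(β-α)^2
      + (1/4)*(c^2*α^2*Real.exp s)*(1-Real.exp t/Real.exp s)^2
      + (1/4)*(d^2*β^2*Real.exp t)*(1-Real.exp s/Real.exp t)^2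
      - (-(d-c)*(d*β^2*Real.exp t - c*α^2*Real.exp s))
      = (4*Real.exp s*Real.exp t*((c^2*Real.exp t + d^2*Real.exp s)*(β-α)^2)
        + Real.exp t*(c^2*α^2)*(Real.exp s-Real.exp t)^2
        + Real.exp s*(d^2*β^2)*(Real.exp s-Real.exp t)^2
        - 4*Real.exp s*Real.exp t*(-(d-c)*(d*β^2*Real.exp t - c*α^2*Real.exp s)))
          / (4*Real.exp s*Real.exp t) := by
    field_simp
    ring
  rw [hid]
  exact div_nonneg (by linarith) (by positivity)


lemma double_sum_eq_of_pair {G : Type*} [DecidableEq G] (D : Finset G) (f g : G → G → ℝ)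
    (h : ∀ x ∈ D, ∀ y ∈ D, f x y + f y x = g x y + g y x) :
    ∑ x ∈ D, ∑ y ∈ D, f x y = ∑ x ∈ D, ∑ y ∈ D, g x y := by
  have hf : (∑ x ∈ D, ∑ y ∈ D, f x y) + (∑ x ∈ D, ∑ y ∈ D, f x y)
      = ∑ x ∈ D, ∑ y ∈ D, (f x y + f y x) := by
    nth_rewrite 2 [Finset.sum_comm]
    rw [← Finset.sum_add_distrib]
    exact Finset.sum_congr rfl fun x _ => (Finset.sum_add_distrib).symm
  have hg : (∑ x ∈ D, ∑ y ∈ D, g x y) + (∑ x ∈ D, ∑ y ∈ D, g x y)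
      = ∑ x ∈ D, ∑ y ∈ D, (g x y + g y x) := by
    nth_rewrite 2 [Finset.sum_comm]
    rw [← Finset.sum_add_distrib]
    exact Finset.sum_congr rfl fun x _ => (Finset.sum_add_distrib).symm
  have : ∑ x ∈ D, ∑ y ∈ D, (f x y + f y x) = ∑ x ∈ D, ∑ y ∈ D, (g x y + g y x) :=
    Finset.sum_congr rfl fun x hx => Finset.sum_congr rfl fun y hy => h x hx y hy
  linarith

/-- Proposition 4.3: key a priori estimate for `p ≥ 2`. -/
theorem stmt15 {G : Type*} [Countable G] [Infinite G]
    (ω : G → G → ℝ) (μ : G → ℝ)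
    (hω_nonneg : ∀ x y, 0 ≤ ω x y)
    (hω_symm : ∀ x y, ω x y = ω y x)
    (hω_diag : ∀ x, ω x x = 0)
    (hloc : ∀ x, {y | ω x y ≠ 0}.Finite)
    (hconn : ∀ x y : G, Relation.ReflTransGen (fun a b => 0 < ω a b) x y)
    (hμ : ∀ x, 0 < μ x)
    (V : G → ℝ) (u : G → ℝ)
    (hu_sum : ∀ x, Summable fun y => (u y - u x) * ω x y)
    (hu : ∀ x, (μ x)⁻¹ * (∑' y, (u y - u x) * ω x y) - V x * u x = 0)
    (p : ℝ) (hp : 2 ≤ p)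
    (η ξ : G → ℝ)
    (hη_nonneg : ∀ x, 0 ≤ η x)
    (hη_supp : (Function.support η).Finite)
    (hmono : ∀ x y : G, 0 < ω x y →
      ((η y)^2 - (η x)^2) * (Real.exp (ξ y) - Real.exp (ξ x)) ≥ 0)
    (hξsum : ∀ x, Summable fun y => ω x y * (1 - Real.exp (ξ y - ξ x))^2)
    (hexpsum : ∀ x, Summable fun y => ω x y * Real.exp (ξ y)) :
    (1/2) * ∑' x, |u x| ^ p * (η x)^2 * Real.exp (ξ x) *
        (p * V x * μ x - (1/2) * ∑' y, ω x y * (1 - Real.exp (ξ y - ξ x))^2)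
      ≤ ∑' x, ∑' y, |u x| ^ p * Real.exp (ξ y) * (η y - η x)^2 * ω x y := by
  classical
  have hp0 : (0:ℝ) < p := by linarith
  -- |a|^(p-2) * (a*a) = |a|^p
  have hpsi : ∀ a : ℝ, |a| ^ (p-2) * (a * a) = |a| ^ p := by
    intro a
    rcases eq_or_ne a 0 with rfl | ha
    · simp [Real.zero_rpow (ne_of_gt hp0)]
    · have hA : 0 < |a| := abs_pos.mpr ha
      rw [← abs_mul_abs_self a]
      have h2' : |a| * |a| = |a| ^ (2:ℝ) := by
        rw [show (2:ℝ) = ((2:ℕ):ℝ) by norm_num, Real.rpow_natCast]; ring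
      rw [h2', ← Real.rpow_add hA]
      norm_num
  -- |a|^(p/2) * |a|^(p/2) = |a|^p
  have hvw : ∀ a : ℝ, |a| ^ (p/2) * |a| ^ (p/2) = |a| ^ p := by
    intro a
    rcases eq_or_ne a 0 with rfl | ha
    · simp [Real.zero_rpow (by positivity : p/2 ≠ 0), Real.zero_rpow (ne_of_gt hp0)]
    · have hA : 0 < |a| := abs_pos.mpr ha
      rw [← Real.rpow_add hA]; norm_num
  have hv_nonneg : ∀ a : ℝ, 0 ≤ |a| ^ (p/2) := fun a => Real.rpow_nonneg (abs_nonneg a) _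
  -- finsets
  set nb : G → Finset G := fun x => (hloc x).toFinset with hnb_def
  have hnb_mem : ∀ x y, y ∈ nb x ↔ ω x y ≠ 0 := by
    intro x y; simp [hnb_def, Set.Finite.mem_toFinset]
  set A : Finset G := hη_supp.toFinset with hA_def
  have hA_mem : ∀ x, x ∈ A ↔ η x ≠ 0 := by
    intro x; simp [hA_def, Set.Finite.mem_toFinset, Function.mem_support]
  set B1 : Finset G := A ∪ A.biUnion nb with hB1_def
  set B2 : Finset G := B1 ∪ B1.biUnion nb with hB2_def
  set D : Finset G := B2 ∪ B2.biUnion nb with hD_def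
  have hAB1 : A ⊆ B1 := Finset.subset_union_left
  have hB1B2 : B1 ⊆ B2 := Finset.subset_union_left
  have hB2D : B2 ⊆ D := Finset.subset_union_left
  have hAD : A ⊆ D := hAB1.trans (hB1B2.trans hB2D)
  have hnbB1 : ∀ x ∈ A, nb x ⊆ B1 := by
    intro x hx y hy
    exact Finset.mem_union_right _ (Finset.mem_biUnion.mpr ⟨x, hx, hy⟩)
  have hnbB2 : ∀ x ∈ B1, nb x ⊆ B2 := by
    intro x hx y hy
    exact Finset.mem_union_right _ (Finset.mem_biUnion.mpr ⟨x, hx, hy⟩)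
  have hnbD : ∀ x ∈ B2, nb x ⊆ D := by
    intro x hx y hy
    exact Finset.mem_union_right _ (Finset.mem_biUnion.mpr ⟨x, hx, hy⟩)
  have hη0 : ∀ x, x ∉ A → η x = 0 := by
    intro x hx; by_contra h; exact hx ((hA_mem x).mpr h)
  have hB1out : ∀ x, x ∉ B1 → ∀ y, ω x y ≠ 0 → η y = 0 := by
    intro x hx y hωxy
    by_contra h
    have hyA : y ∈ A := (hA_mem y).mpr h
    have : x ∈ nb y := (hnb_mem y x).mpr (by rw [hω_symm y x]; exact hωxy)
    exact hx (hnbB1 y hyA this)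
  -- inner tsum conversions
  have hinner : ∀ x ∈ B2, (∑' y, ω x y * (1 - Real.exp (ξ y - ξ x))^2)
      = ∑ y ∈ D, ω x y * (1 - Real.exp (ξ y - ξ x))^2 := by
    intro x hx
    apply tsum_eq_sum
    intro y hy
    have : ω x y = 0 := by
      by_contra h
      exact hy (hnbD x hx ((hnb_mem x y).mpr h))
    rw [this]; ring
  have hEq : ∀ x ∈ A, ∑ y ∈ D, (u y - u x) * ω x y = V x * u x * μ x := by
    intro x hx
    have h1 : (∑' y, (u y - u x) * ω x y) = ∑ y ∈ D, (u y - u x) * ω x y := by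
      apply tsum_eq_sum
      intro y hy
      have : ω x y = 0 := by
        by_contra h
        exact hy (hB2D (hB1B2 (hnbB1 x hx ((hnb_mem x y).mpr h))))
      rw [this]; ring
    have h2 := hu x
    rw [h1] at h2
    have hμx := (hμ x).ne'
    field_simp at h2
    linarith [h2]
  -- outer conversions
  have hL1 : (∑' x, |u x| ^ p * (η x)^2 * Real.exp (ξ x) *
        (p * V x * μ x - (1/2) * ∑' y, ω x y * (1 - Real.exp (ξ y - ξ x))^2))
      = ∑ x ∈ D, |u x| ^ p * (η x)^2 * Real.exp (ξ x) *
        (p * V x * μ x - (1/2) * ∑ y ∈ D, ω x y * (1 - Real.exp (ξ y - ξ x))^2) := by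
    rw [tsum_eq_sum (s := D) ?_]
    · apply Finset.sum_congr rfl
      intro x hx
      by_cases hxA : x ∈ A
      · rw [hinner x (hB1B2 (hAB1 hxA))]
      · rw [hη0 x hxA]; ring
    · intro x hx
      rw [hη0 x (fun hA => hx (hAD hA))]; ring
  have hR1 : (∑' x, ∑' y, |u x| ^ p * Real.exp (ξ y) * (η y - η x)^2 * ω x y)
      = ∑ x ∈ D, ∑ y ∈ D, |u x| ^ p * Real.exp (ξ y) * (η y - η x)^2 * ω x y := by
    rw [tsum_eq_sum (s := D) ?_]
    · apply Finset.sum_congr rfl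
      intro x hx
      by_cases hxB : x ∈ B1
      · apply tsum_eq_sum
        intro y hy
        have : ω x y = 0 := by
          by_contra h
          exact hy (hnbD x (hB1B2 hxB) ((hnb_mem x y).mpr h))
        rw [this]; ring
      · have hzero : ∀ y, |u x| ^ p * Real.exp (ξ y) * (η y - η x)^2 * ω x y = 0 := by
          intro y
          by_cases h : ω x y = 0
          · rw [h]; ring
          · rw [hB1out x hxB y h, hη0 x (fun hA => hxB (hAB1 hA))]; ring
        calc (∑' y, |u x| ^ p * Real.exp (ξ y) * (η y - η x)^2 * ω x y)
            = ∑' y, (0:ℝ) := by exact tsum_congr hzero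
          _ = 0 := tsum_zero
          _ = ∑ y ∈ D, |u x| ^ p * Real.exp (ξ y) * (η y - η x)^2 * ω x y :=
              (Finset.sum_eq_zero fun y _ => hzero y).symm
    · intro x hx
      have hxB : x ∉ B1 := fun h => hx (hB2D (hB1B2 h))
      have hzero : ∀ y, |u x| ^ p * Real.exp (ξ y) * (η y - η x)^2 * ω x y = 0 := by
        intro y
        by_cases h : ω x y = 0
        · rw [h]; ring
        · rw [hB1out x hxB y h, hη0 x (fun hA => hxB (hAB1 hA))]; ring
      calc (∑' y, |u x| ^ p * Real.exp (ξ y) * (η y - η x)^2 * ω x y)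
          = ∑' y, (0:ℝ) := tsum_congr hzero
        _ = 0 := tsum_zero
  rw [hL1, hR1]
  -- step 1 : Kato + equation
  have step1 : ∑ x ∈ D, p * V x * μ x * (|u x| ^ p * (η x)^2 * Real.exp (ξ x))
      ≤ ∑ x ∈ D, ∑ y ∈ D, 2 * |u x| ^ (p/2) * (|u y| ^ (p/2) - |u x| ^ (p/2)) * ω x y *
          ((η x)^2 * Real.exp (ξ x)) := by
    apply Finset.sum_le_sum
    intro x hx
    by_cases hxA : x ∈ A
    · have hT := hEq x hxA
      have expand : p * V x * μ x * (|u x| ^ p * (η x)^2 * Real.exp (ξ x))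
          = ∑ y ∈ D, p * (|u x| ^ (p-2) * u x) * (u y - u x) * ω x y *
              ((η x)^2 * Real.exp (ξ x)) := by
        calc p * V x * μ x * (|u x| ^ p * (η x)^2 * Real.exp (ξ x))
            = p * (|u x| ^ (p-2) * u x) * (∑ y ∈ D, (u y - u x) * ω x y) *
                ((η x)^2 * Real.exp (ξ x)) := by
              rw [hT, ← hpsi (u x)]; ring
          _ = ∑ y ∈ D, p * (|u x| ^ (p-2) * u x) * (u y - u x) * ω x y *
                ((η x)^2 * Real.exp (ξ x)) := by
              rw [Finset.mul_sum, Finset.sum_mul]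
              exact Finset.sum_congr rfl fun y _ => by ring
      rw [expand]
      apply Finset.sum_le_sum
      intro y hy
      have hk := kato p hp (u x) (u y)
      have hr : (0:ℝ) ≤ ω x y * ((η x)^2 * Real.exp (ξ x)) :=
        mul_nonneg (hω_nonneg x y) (by positivity)
      have hmul := mul_le_mul_of_nonneg_right hk hr
      nlinarith [hmul]
    · have h0 : η x = 0 := hη0 x hxA
      rw [h0]
      have hL : p * V x * μ x * (|u x| ^ p * (0:ℝ)^2 * Real.exp (ξ x)) = 0 := by ring
      have hR : ∀ y ∈ D, 2 * |u x| ^ (p/2) * (|u y| ^ (p/2) - |u x| ^ (p/2)) * ω x y *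
          ((0:ℝ)^2 * Real.exp (ξ x)) = 0 := fun y _ => by ring
      rw [hL, Finset.sum_eq_zero hR]
  -- step 2 : symmetrization
  have step2 : ∑ x ∈ D, ∑ y ∈ D, 2 * |u x| ^ (p/2) * (|u y| ^ (p/2) - |u x| ^ (p/2)) * ω x y *
        ((η x)^2 * Real.exp (ξ x))
      = ∑ x ∈ D, ∑ y ∈ D, (-(|u y| ^ (p/2) - |u x| ^ (p/2)) *
          (|u y| ^ (p/2) * (η y)^2 * Real.exp (ξ y) - |u x| ^ (p/2) * (η x)^2 * Real.exp (ξ x)) *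
          ω x y) := by
    apply double_sum_eq_of_pair
    intro x hx y hy
    rw [hω_symm y x]
    ring
  -- step 3 : pointwise quadratic inequality
  have step3 : ∑ x ∈ D, ∑ y ∈ D, (-(|u y| ^ (p/2) - |u x| ^ (p/2)) *
          (|u y| ^ (p/2) * (η y)^2 * Real.exp (ξ y) - |u x| ^ (p/2) * (η x)^2 * Real.exp (ξ x)) *
          ω x y)
      ≤ ∑ x ∈ D, ∑ y ∈ D, ((|u x| ^ p * Real.exp (ξ y) + |u y| ^ p * Real.exp (ξ x)) *
            (η y - η x)^2 * ω x y
          + (1/4) * (|u x| ^ p * (η x)^2 * Real.exp (ξ x)) * (1 - Real.exp (ξ y - ξ x))^2 * ω x y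
          + (1/4) * (|u y| ^ p * (η y)^2 * Real.exp (ξ y)) * (1 - Real.exp (ξ x - ξ y))^2 * ω x y) := by
    apply Finset.sum_le_sum
    intro x hx
    apply Finset.sum_le_sum
    intro y hy
    have hd := dag (|u x| ^ (p/2)) (|u y| ^ (p/2)) (η x) (η y) (ξ x) (ξ y)
      (hv_nonneg (u x)) (hv_nonneg (u y)) (hη_nonneg x) (hη_nonneg y)
    have hv2x : (|u x| ^ (p/2))^2 = |u x| ^ p := by rw [sq]; exact hvw (u x)
    have hv2y : (|u y| ^ (p/2))^2 = |u y| ^ p := by rw [sq]; exact hvw (u y)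
    have hmul := mul_le_mul_of_nonneg_right hd (hω_nonneg x y)
    rw [hv2x, hv2y] at hmul
    linarith [hmul]
  -- step 4 : desymmetrize
  have step4 : ∑ x ∈ D, ∑ y ∈ D, ((|u x| ^ p * Real.exp (ξ y) + |u y| ^ p * Real.exp (ξ x)) *
            (η y - η x)^2 * ω x y
          + (1/4) * (|u x| ^ p * (η x)^2 * Real.exp (ξ x)) * (1 - Real.exp (ξ y - ξ x))^2 * ω x y
          + (1/4) * (|u y| ^ p * (η y)^2 * Real.exp (ξ y)) * (1 - Real.exp (ξ x - ξ y))^2 * ω x y)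
      = ∑ x ∈ D, ∑ y ∈ D, (2 * (|u x| ^ p * Real.exp (ξ y) * (η y - η x)^2 * ω x y)
          + (1/2) * (|u x| ^ p * (η x)^2 * Real.exp (ξ x) *
              (ω x y * (1 - Real.exp (ξ y - ξ x))^2))) := by
    apply double_sum_eq_of_pair
    intro x hx y hy
    rw [hω_symm y x]
    ring
  -- step 5 : split the double sum
  have step5 : ∑ x ∈ D, ∑ y ∈ D, (2 * (|u x| ^ p * Real.exp (ξ y) * (η y - η x)^2 * ω x y)
          + (1/2) * (|u x| ^ p * (η x)^2 * Real.exp (ξ x) *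
              (ω x y * (1 - Real.exp (ξ y - ξ x))^2)))
      = 2 * (∑ x ∈ D, ∑ y ∈ D, |u x| ^ p * Real.exp (ξ y) * (η y - η x)^2 * ω x y)
        + (1/2) * (∑ x ∈ D, ∑ y ∈ D, |u x| ^ p * (η x)^2 * Real.exp (ξ x) *
              (ω x y * (1 - Real.exp (ξ y - ξ x))^2)) := by
    rw [Finset.mul_sum, Finset.mul_sum, ← Finset.sum_add_distrib]
    apply Finset.sum_congr rfl
    intro x hx
    rw [Finset.mul_sum, Finset.mul_sum, ← Finset.sum_add_distrib]
  -- LHS split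
  have hLHSsplit : ∑ x ∈ D, |u x| ^ p * (η x)^2 * Real.exp (ξ x) *
        (p * V x * μ x - (1/2) * ∑ y ∈ D, ω x y * (1 - Real.exp (ξ y - ξ x))^2)
      = ∑ x ∈ D, p * V x * μ x * (|u x| ^ p * (η x)^2 * Real.exp (ξ x))
        - (1/2) * (∑ x ∈ D, ∑ y ∈ D, |u x| ^ p * (η x)^2 * Real.exp (ξ x) *
              (ω x y * (1 - Real.exp (ξ y - ξ x))^2)) := by
    rw [Finset.mul_sum, ← Finset.sum_sub_distrib]
    apply Finset.sum_congr rfl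
    intro x hx
    have h' : (|u x| ^ p * (η x)^2 * Real.exp (ξ x)) *
        ∑ y ∈ D, (ω x y * (1 - Real.exp (ξ y - ξ x))^2)
        = ∑ y ∈ D, |u x| ^ p * (η x)^2 * Real.exp (ξ x) *
            (ω x y * (1 - Real.exp (ξ y - ξ x))^2) := Finset.mul_sum _ _ _
    linear_combination (-(1/2) : ℝ) * h'
  rw [hLHSsplit]
  linarith [step1, step2, step3, step4, step5]
end

section
/- Let (G, ω, μ) be an infinite connected weighted graph carrying a pseudo metric d with finite jump size s, finite balls, which is 2-intrinsic with bound 1 and also 1-intrinsic with bound C₀. Let V : G → ℝ with c₀ := inf_G V > 0. Let p ≥ 1 and α > 0 satisfy C₀ α e^{sα} < c₀ p. If u solves Δu - Vu = 0 on G and ∑_{x∈G} |u(x)|^p e^{-α d(x,x₀)} μ(x) < ∞ for some x₀ ∈ G, then u ≡ 0. -/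
lemma aux_bernoulli {p : ℝ} (hp : 1 ≤ p) {a b : ℝ} (ha : 0 ≤ a) (hb : 0 ≤ b) :
    p * a ^ (p - 1) * (b - a) ≤ b ^ p - a ^ p := by
  rcases ha.eq_or_lt with h0 | hapos
  · rw [← h0]
    rcases hp.eq_or_lt with hp1 | hp1
    · rw [← hp1]
      norm_num [Real.rpow_zero, Real.rpow_one]
    · have hpne : p ≠ 0 := by linarith
      rw [Real.zero_rpow (by intro h; rw [sub_eq_zero] at h; linarith), Real.zero_rpow hpne]
      have := Real.rpow_nonneg hb p
      nlinarith
  · have hb' : -1 ≤ b / a - 1 := by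
      have : 0 ≤ b / a := div_nonneg hb hapos.le
      linarith
    have key := one_add_mul_self_le_rpow_one_add hb' hp
    have h1 : (1 + (b / a - 1)) = b / a := by ring
    rw [h1, Real.div_rpow hb hapos.le] at key
    have hap : 0 < a ^ p := Real.rpow_pos_of_pos hapos p
    have h3 : a ^ (p - 1) = a ^ p / a := by
      rw [Real.rpow_sub hapos, Real.rpow_one]
    rw [h3]
    have h4 := mul_le_mul_of_nonneg_left key hap.le
    have h5 : a ^ p * (b ^ p / a ^ p) = b ^ p := by field_simp
    rw [h5] at h4
    have h6 : p * (a ^ p / a) * (b - a) = a ^ p * (1 + p * (b / a - 1)) - a ^ p := by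
      field_simp
      ring
    linarith

lemma aux_exp {α s dx dy dxy : ℝ} (hα : 0 < α) (h0 : dx ≤ dy)
    (h1 : dy - dx ≤ dxy) (h2 : dxy ≤ s) :
    Real.exp (-α * dx) - Real.exp (-α * dy)
      ≤ α * Real.exp (s * α) * (Real.exp (-α * dy) * dxy) := by
  have ht0 : 0 ≤ α * (dy - dx) := by nlinarith
  have hdxy0 : 0 ≤ dxy := le_trans (by linarith) h1
  have key : Real.exp (α * (dy - dx)) - 1
      ≤ α * (dy - dx) * Real.exp (α * (dy - dx)) := by
    have hbn := Real.add_one_le_exp (-(α * (dy - dx)))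
    have hm : Real.exp (-(α * (dy - dx))) * Real.exp (α * (dy - dx)) = 1 := by
      rw [← Real.exp_add]; simp
    nlinarith [Real.exp_pos (α * (dy - dx))]
  have hle : Real.exp (α * (dy - dx)) ≤ Real.exp (s * α) := by
    apply Real.exp_le_exp.2; nlinarith
  have hid : Real.exp (-α * dx) = Real.exp (-α * dy) * Real.exp (α * (dy - dx)) := by
    rw [← Real.exp_add]; ring_nf
  rw [hid]
  have hEy := Real.exp_pos (-α * dy)
  have step1 : Real.exp (-α * dy) * Real.exp (α * (dy - dx)) - Real.exp (-α * dy)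
      ≤ Real.exp (-α * dy) * (α * (dy - dx) * Real.exp (α * (dy - dx))) := by nlinarith
  have step2 : α * (dy - dx) * Real.exp (α * (dy - dx)) ≤ α * dxy * Real.exp (s * α) := by
    have h2' : α * (dy - dx) ≤ α * dxy := by nlinarith
    have e1 := mul_le_mul_of_nonneg_left hle ht0
    have e2 := mul_le_mul_of_nonneg_right h2' (Real.exp_nonneg (s * α))
    linarith
  nlinarith

lemma aux_exp_abs {α s dx dy dxy : ℝ} (hα : 0 < α) (habs : |dx - dy| ≤ dxy) (hds : dxy ≤ s) :
    |Real.exp (-α * dx) - Real.exp (-α * dy)|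
      ≤ α * Real.exp (s * α) * (min (Real.exp (-α * dx)) (Real.exp (-α * dy)) * dxy) := by
  rcases le_total dx dy with h | h
  · have h1 : dy - dx ≤ dxy := by
      rw [abs_sub_comm, abs_of_nonneg (by linarith)] at habs; exact habs
    have hord : Real.exp (-α * dy) ≤ Real.exp (-α * dx) :=
      Real.exp_le_exp.2 (by nlinarith)
    rw [min_eq_right hord, abs_of_nonneg (by linarith)]
    exact aux_exp hα h h1 hds
  · have h1 : dx - dy ≤ dxy := by
      rw [abs_of_nonneg (by linarith)] at habs; exact habs
    have hord : Real.exp (-α * dx) ≤ Real.exp (-α * dy) :=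
      Real.exp_le_exp.2 (by nlinarith)
    rw [min_eq_left hord, abs_sub_comm, abs_of_nonneg (by linarith)]
    exact aux_exp hα h h1 hds

set_option maxHeartbeats 2000000 in
/-- Theorem 3.3: uniqueness in weighted ℓ^p, p ≥ 1, under the extra
1-intrinsic assumption. -/
theorem stmt17 {G : Type*} [Countable G] [Infinite G]
    (ω : G → G → ℝ) (μ : G → ℝ) (d : G → G → ℝ)
    (hω_nonneg : ∀ x y, 0 ≤ ω x y)
    (hω_symm : ∀ x y, ω x y = ω y x)
    (hω_diag : ∀ x, ω x x = 0)
    (hω_sum : ∀ x, Summable fun y => ω x y)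
    (hconn : ∀ x y : G, Relation.ReflTransGen (fun a b => 0 < ω a b) x y)
    (hμ : ∀ x, 0 < μ x)
    (hd_self : ∀ x, d x x = 0)
    (hd_symm : ∀ x y, d x y = d y x)
    (hd_tri : ∀ x y z, d x y ≤ d x z + d z y)
    (s : ℝ) (hs : 0 ≤ s) (hjump : ∀ x y, 0 < ω x y → d x y ≤ s)
    (hballs : ∀ (x : G) (r : ℝ), {y | d y x < r}.Finite)
    (hwsum : ∀ x, Summable fun y => ω x y * (d x y)^2)
    (hintr : ∀ x, ∑' y, ω x y * (d x y)^2 ≤ μ x)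
    (C₀ : ℝ)
    (hdsum : ∀ x, Summable fun y => ω x y * d x y)
    (hintr1 : ∀ x, ∑' y, ω x y * d x y ≤ C₀ * μ x)
    (V : G → ℝ) (c₀ : ℝ) (hc₀ : 0 < c₀) (hV : ∀ x, c₀ ≤ V x)
    (p α : ℝ) (hp : 1 ≤ p) (hα : 0 < α)
    (hαcond : C₀ * α * Real.exp (s * α) < c₀ * p)
    (u : G → ℝ)
    (hu_sum : ∀ x, Summable fun y => (u y - u x) * ω x y)
    (hu : ∀ x, (μ x)⁻¹ * (∑' y, (u y - u x) * ω x y) - V x * u x = 0)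
    (x₀ : G)
    (hℓp : Summable fun x => |u x| ^ p * Real.exp (-α * d x x₀) * μ x) :
    ∀ x, u x = 0 := by
  classical
  have hd_nonneg : ∀ x y, 0 ≤ d x y := by
    intro x y
    nlinarith [hd_tri x x y, hd_self x, hd_symm x y]
  have hp0 : (0:ℝ) < p := lt_of_lt_of_le one_pos hp
  have hW_nonneg : ∀ x : G, (0:ℝ) ≤ |u x| ^ p := fun x => Real.rpow_nonneg (abs_nonneg _) _
  have hF_pos : ∀ x : G, 0 < Real.exp (-α * d x x₀) := fun x => Real.exp_pos _
  have hexp1 : (1:ℝ) ≤ Real.exp (s * α) := Real.one_le_exp (by positivity)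
  have hterm_nonneg : ∀ x : G, 0 ≤ |u x| ^ p * Real.exp (-α * d x x₀) * μ x :=
    fun x => mul_nonneg (mul_nonneg (hW_nonneg x) (hF_pos x).le) (hμ x).le
  -- each vertex has finitely many neighbours
  have hnbr : ∀ x : G, {y : G | ω x y ≠ 0}.Finite := by
    intro x
    apply (hballs x (s + 1)).subset
    intro y hy
    have hpos : 0 < ω x y := lt_of_le_of_ne (hω_nonneg x y) (Ne.symm hy)
    have h1 := hjump x y hpos
    simp only [Set.mem_setOf_eq]
    rw [← hd_symm]; linarith
  have hsum1 : ∀ (x : G) (g : G → ℝ), Summable fun y => g y * ω x y := by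
    intro x g
    apply summable_of_finite_support ((hnbr x).subset ?_)
    intro y hy
    simp only [Function.mem_support] at hy
    simp only [Set.mem_setOf_eq]
    intro h; apply hy; rw [h, mul_zero]
  -- the subsolution inequality for |u|^p
  have hsub : ∀ x, c₀ * p * (|u x| ^ p * μ x) ≤ ∑' y, (|u y| ^ p - |u x| ^ p) * ω x y := by
    intro x
    set σ : ℝ := if u x < 0 then -1 else 1 with hσ
    have hσu : σ * u x = |u x| := by
      rw [hσ]; split_ifs with h
      · rw [abs_of_neg h]; ring
      · rw [abs_of_nonneg (not_lt.1 h)]; ring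
    have hσle : ∀ y, σ * u y ≤ |u y| := by
      intro y; rw [hσ]; split_ifs with h
      · nlinarith [neg_abs_le (u y)]
      · nlinarith [le_abs_self (u y)]
    have hT : ∑' y, (u y - u x) * ω x y = V x * u x * μ x := by
      have h := hu x
      rw [sub_eq_zero] at h
      have h2 : μ x * ((μ x)⁻¹ * (∑' y, (u y - u x) * ω x y)) = μ x * (V x * u x) := by
        rw [h]
      rw [mul_inv_cancel_left₀ (ne_of_gt (hμ x))] at h2
      rw [h2]; ring
    have hlow : Summable fun y => (p * |u x| ^ (p - 1) * σ) * ((u y - u x) * ω x y) :=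
      (hu_sum x).mul_left _
    have hhigh : Summable fun y => (|u y| ^ p - |u x| ^ p) * ω x y := hsum1 x _
    have hterm : ∀ y, (p * |u x| ^ (p - 1) * σ) * ((u y - u x) * ω x y)
        ≤ (|u y| ^ p - |u x| ^ p) * ω x y := by
      intro y
      have hbern := aux_bernoulli hp (abs_nonneg (u x)) (abs_nonneg (u y))
      have hpw : 0 ≤ p * |u x| ^ (p - 1) :=
        mul_nonneg hp0.le (Real.rpow_nonneg (abs_nonneg _) _)
      have h2 : σ * (u y - u x) ≤ |u y| - |u x| := by
        have h3 := hσle y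
        have hexp : σ * (u y - u x) = σ * u y - σ * u x := by ring
        rw [hexp, hσu]; linarith
      have h3 : p * |u x| ^ (p - 1) * (σ * (u y - u x)) ≤ |u y| ^ p - |u x| ^ p :=
        le_trans (mul_le_mul_of_nonneg_left h2 hpw) hbern
      have h4 := mul_le_mul_of_nonneg_right h3 (hω_nonneg x y)
      calc (p * |u x| ^ (p - 1) * σ) * ((u y - u x) * ω x y)
          = (p * |u x| ^ (p - 1) * (σ * (u y - u x))) * ω x y := by ring
        _ ≤ (|u y| ^ p - |u x| ^ p) * ω x y := h4
    have hmain := Summable.tsum_le_tsum hterm hlow hhigh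
    rw [tsum_mul_left, hT] at hmain
    refine le_trans ?_ hmain
    rcases eq_or_ne (u x) 0 with h0 | h0
    · rw [h0]; simp [Real.zero_rpow (ne_of_gt hp0)]
    · have hv : 0 < |u x| := abs_pos.2 h0
      have hvp : |u x| ^ (p - 1) * |u x| = |u x| ^ p := by
        rw [← Real.rpow_add_one (ne_of_gt hv) (p - 1)]
        norm_num
      have heq : (p * |u x| ^ (p - 1) * σ) * (V x * u x * μ x)
          = p * V x * ((|u x| ^ (p - 1) * (σ * u x)) * μ x) := by ring
      rw [heq, hσu, hvp]
      have h5 : 0 ≤ |u x| ^ p * μ x := mul_nonneg (hW_nonneg x) (hμ x).le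
      nlinarith [hV x, mul_nonneg (mul_nonneg (sub_nonneg.2 (hV x)) hp0.le) h5]
  set S : ℝ := ∑' x, |u x| ^ p * Real.exp (-α * d x x₀) * μ x with hS
  have hS_nonneg : 0 ≤ S := tsum_nonneg hterm_nonneg
  -- main estimate with cutoff
  have hmain : ∀ n : ℕ, 1 ≤ n →
      c₀ * p * (∑' x, max 0 (min 1 (2 - d x x₀ / (n:ℝ)))
          * (|u x| ^ p * Real.exp (-α * d x x₀) * μ x))
        ≤ (α + 1/(n:ℝ)) * (Real.exp (s * α) * (C₀ * S)) := by
    intro n hn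
    have hn0 : (0:ℝ) < n := by
      have : (1:ℝ) ≤ n := by exact_mod_cast hn
      linarith
    set η : G → ℝ := fun x => max 0 (min 1 (2 - d x x₀ / (n:ℝ))) with hηdef
    set φ : G → ℝ := fun x => Real.exp (-α * d x x₀) * η x with hφdef
    have hη0 : ∀ x, 0 ≤ η x := fun x => le_max_left _ _
    have hη1 : ∀ x, η x ≤ 1 := fun x => max_le (by norm_num) (min_le_left _ _)
    have hφ0 : ∀ x, 0 ≤ φ x := fun x => mul_nonneg (hF_pos x).le (hη0 x)
    have hφd : ∀ x, φ x ≠ 0 → d x x₀ < 2 * (n:ℝ) := by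
      intro x hx
      by_contra hcon
      push_neg at hcon
      apply hx
      have ht : 2 - d x x₀ / (n:ℝ) ≤ 0 := by
        have : 2 ≤ d x x₀ / (n:ℝ) := (le_div_iff₀ hn0).2 (by linarith)
        linarith
      have hm : min 1 (2 - d x x₀ / (n:ℝ)) ≤ 0 := le_trans (min_le_right _ _) ht
      simp only [hφdef, hηdef]
      rw [max_eq_left hm, mul_zero]
    have hηlip : ∀ x y, |η x - η y| ≤ d x y / (n:ℝ) := by
      intro x y
      have h1 : |η x - η y|
          ≤ |min 1 (2 - d x x₀ / (n:ℝ)) - min 1 (2 - d y x₀ / (n:ℝ))| := by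
        simp only [hηdef]
        rw [max_comm 0 (min 1 (2 - d x x₀ / (n:ℝ))), max_comm 0 (min 1 (2 - d y x₀ / (n:ℝ)))]
        exact abs_max_sub_max_le_abs _ _ _
      have h2 : |min 1 (2 - d x x₀ / (n:ℝ)) - min 1 (2 - d y x₀ / (n:ℝ))|
          ≤ |(2 - d x x₀ / (n:ℝ)) - (2 - d y x₀ / (n:ℝ))| := by
        have h := abs_min_sub_min_le_max 1 (2 - d x x₀ / (n:ℝ)) 1 (2 - d y x₀ / (n:ℝ))
        simpa using h
      have h3 : |(2 - d x x₀ / (n:ℝ)) - (2 - d y x₀ / (n:ℝ))| = |d y x₀ - d x x₀| / (n:ℝ) := by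
        have he : (2 - d x x₀ / (n:ℝ)) - (2 - d y x₀ / (n:ℝ)) = (d y x₀ - d x x₀) / (n:ℝ) := by
          ring
        rw [he, abs_div, abs_of_pos hn0]
      have h4 : |d y x₀ - d x x₀| ≤ d x y := by
        rw [abs_sub_le_iff]
        constructor
        · have h5 := hd_tri y x₀ x
          have h6 := hd_symm x y
          linarith
        · have h5 := hd_tri x x₀ y
          linarith
      have h7 : |d y x₀ - d x x₀| / (n:ℝ) ≤ d x y / (n:ℝ) := (div_le_div_iff_of_pos_right hn0).2 h4
      linarith [le_trans h1 h2, h3 ▸ le_trans h1 h2]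
    have hKfin : (({x : G | d x x₀ < 2*(n:ℝ) + s + 1}
        ×ˢ {x : G | d x x₀ < 2*(n:ℝ) + s + 1}) : Set (G × G)).Finite :=
      (hballs x₀ _).prod (hballs x₀ _)
    have hpairsum : ∀ g : G × G → ℝ,
        (∀ z : G × G, ω z.1 z.2 = 0 → g z = 0) →
        (∀ z : G × G, φ z.1 = 0 → φ z.2 = 0 → g z = 0) → Summable g := by
      intro g h1 h2
      apply summable_of_finite_support (hKfin.subset ?_)
      intro z hz
      simp only [Function.mem_support] at hz
      have hω : ω z.1 z.2 ≠ 0 := fun h => hz (h1 z h)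
      have hωpos : 0 < ω z.1 z.2 := lt_of_le_of_ne (hω_nonneg _ _) (Ne.symm hω)
      have hd12 : d z.1 z.2 ≤ s := hjump _ _ hωpos
      have hφor : φ z.1 ≠ 0 ∨ φ z.2 ≠ 0 := by
        by_contra hcon; push_neg at hcon
        exact hz (h2 z hcon.1 hcon.2)
      have hkey : d z.1 x₀ < 2*(n:ℝ) + s + 1 ∧ d z.2 x₀ < 2*(n:ℝ) + s + 1 := by
        rcases hφor with h | h
        · have hx := hφd _ h
          refine ⟨by linarith, ?_⟩
          have ht := hd_tri z.2 x₀ z.1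
          have h21 := hd_symm z.2 z.1
          linarith [hd_tri z.2 z.1 x₀]
        · have hx := hφd _ h
          refine ⟨?_, by linarith⟩
          have ht := hd_tri z.1 x₀ z.2
          linarith
      exact Set.mem_prod.2 ⟨hkey.1, hkey.2⟩
    have hφfin : (Function.support φ).Finite :=
      (hballs x₀ (2*(n:ℝ))).subset (fun x hx => hφd x hx)
    have hφsum : ∀ g : G → ℝ, Summable fun x => φ x * g x := by
      intro g
      apply summable_of_finite_support (hφfin.subset ?_)
      intro x hx
      simp only [Function.mem_support] at hx ⊢
      intro h; apply hx; rw [h, zero_mul]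
    -- step (i)
    have hstep1 : c₀ * p * (∑' x, η x * (|u x| ^ p * Real.exp (-α * d x x₀) * μ x))
        ≤ ∑' x, φ x * (∑' y, (|u y| ^ p - |u x| ^ p) * ω x y) := by
      have h1 : ∀ x, φ x * (c₀ * p * (|u x| ^ p * μ x))
          ≤ φ x * (∑' y, (|u y| ^ p - |u x| ^ p) * ω x y) :=
        fun x => mul_le_mul_of_nonneg_left (hsub x) (hφ0 x)
      have hl : Summable fun x => φ x * (c₀ * p * (|u x| ^ p * μ x)) := hφsum _
      have hr : Summable fun x => φ x * (∑' y, (|u y| ^ p - |u x| ^ p) * ω x y) := hφsum _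
      have h2 := Summable.tsum_le_tsum h1 hl hr
      refine le_trans (le_of_eq ?_) h2
      rw [← tsum_mul_left]
      apply tsum_congr; intro x
      simp only [hφdef]
      ring
    -- step (ii)
    have hA_sum : Summable (fun z : G × G =>
        φ z.1 * ((|u z.2| ^ p - |u z.1| ^ p) * ω z.1 z.2)) := by
      apply hpairsum
      · intro z h; rw [h]; ring
      · intro z h1 _; rw [h1]; ring
    have hA_fiber : ∀ x, Summable fun y => φ x * ((|u y| ^ p - |u x| ^ p) * ω x y) :=
      fun x => (hsum1 x _).mul_left _
    have hstep2 : (∑' x, φ x * (∑' y, (|u y| ^ p - |u x| ^ p) * ω x y))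
        = ∑' z : G × G, φ z.1 * ((|u z.2| ^ p - |u z.1| ^ p) * ω z.1 z.2) := by
      rw [Summable.tsum_prod' hA_sum hA_fiber]
      exact tsum_congr fun x => tsum_mul_left.symm
    -- step (iii)
    have hA'_sum : Summable (fun z : G × G =>
        φ z.2 * ((|u z.1| ^ p - |u z.2| ^ p) * ω z.1 z.2)) := by
      apply hpairsum
      · intro z h; rw [h]; ring
      · intro z _ h2; rw [h2]; ring
    have hswap : (∑' z : G × G, φ z.1 * ((|u z.2| ^ p - |u z.1| ^ p) * ω z.1 z.2))
        = ∑' z : G × G, φ z.2 * ((|u z.1| ^ p - |u z.2| ^ p) * ω z.1 z.2) := by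
      rw [← (Equiv.prodComm G G).tsum_eq
        (fun z : G × G => φ z.1 * ((|u z.2| ^ p - |u z.1| ^ p) * ω z.1 z.2))]
      apply tsum_congr
      intro z
      simp only [Equiv.prodComm_apply, Prod.fst_swap, Prod.snd_swap]
      rw [hω_symm z.2 z.1]
    -- summability and bounds for the majorant
    have hb1_nonneg : ∀ z : G × G,
        0 ≤ Real.exp (-α * d z.1 x₀) * |u z.1| ^ p * (d z.1 z.2 * ω z.1 z.2) := fun z =>
      mul_nonneg (mul_nonneg (hF_pos _).le (hW_nonneg _))
        (mul_nonneg (hd_nonneg _ _) (hω_nonneg _ _))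
    have hb1_fiber : ∀ x : G,
        Summable fun y => Real.exp (-α * d x x₀) * |u x| ^ p * (d x y * ω x y) := by
      intro x
      apply Summable.mul_left
      exact (hdsum x).congr fun y => mul_comm _ _
    have hb1_tsum_fiber : ∀ x : G,
        (∑' y, Real.exp (-α * d x x₀) * |u x| ^ p * (d x y * ω x y))
          ≤ C₀ * (|u x| ^ p * Real.exp (-α * d x x₀) * μ x) := by
      intro x
      rw [tsum_mul_left]
      have h1 : (∑' y, d x y * ω x y) ≤ C₀ * μ x := by
        rw [tsum_congr (fun y => mul_comm (d x y) (ω x y))]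
        exact hintr1 x
      calc Real.exp (-α * d x x₀) * |u x| ^ p * ∑' y, d x y * ω x y
          ≤ Real.exp (-α * d x x₀) * |u x| ^ p * (C₀ * μ x) :=
            mul_le_mul_of_nonneg_left h1 (mul_nonneg (hF_pos x).le (hW_nonneg x))
        _ = C₀ * (|u x| ^ p * Real.exp (-α * d x x₀) * μ x) := by ring
    have hb1_outer : Summable fun x =>
        ∑' y, Real.exp (-α * d x x₀) * |u x| ^ p * (d x y * ω x y) :=
      Summable.of_nonneg_of_le (fun x => tsum_nonneg fun y => hb1_nonneg (x, y))
        hb1_tsum_fiber (hℓp.mul_left C₀)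
    have hb1_sum : Summable (fun z : G × G =>
        Real.exp (-α * d z.1 x₀) * |u z.1| ^ p * (d z.1 z.2 * ω z.1 z.2)) :=
      (summable_prod_of_nonneg hb1_nonneg).2 ⟨hb1_fiber, hb1_outer⟩
    have hb1_le : (∑' z : G × G,
        Real.exp (-α * d z.1 x₀) * |u z.1| ^ p * (d z.1 z.2 * ω z.1 z.2)) ≤ C₀ * S := by
      rw [Summable.tsum_prod' hb1_sum hb1_fiber]
      calc (∑' x, ∑' y, Real.exp (-α * d x x₀) * |u x| ^ p * (d x y * ω x y))
          ≤ ∑' x, C₀ * (|u x| ^ p * Real.exp (-α * d x x₀) * μ x) :=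
            Summable.tsum_le_tsum hb1_tsum_fiber hb1_outer (hℓp.mul_left C₀)
        _ = C₀ * S := tsum_mul_left
    have hb2_sum : Summable (fun z : G × G =>
        Real.exp (-α * d z.2 x₀) * |u z.2| ^ p * (d z.1 z.2 * ω z.1 z.2)) := by
      have h := ((Equiv.prodComm G G).summable_iff).2 hb1_sum
      apply h.congr
      intro z
      simp only [Function.comp_apply, Equiv.prodComm_apply, Prod.fst_swap, Prod.snd_swap]
      rw [hd_symm z.2 z.1, hω_symm z.2 z.1]
    have hb2_le : (∑' z : G × G,
        Real.exp (-α * d z.2 x₀) * |u z.2| ^ p * (d z.1 z.2 * ω z.1 z.2)) ≤ C₀ * S := by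
      have he := (Equiv.prodComm G G).tsum_eq (fun z : G × G =>
        Real.exp (-α * d z.1 x₀) * |u z.1| ^ p * (d z.1 z.2 * ω z.1 z.2))
      have heq : (∑' z : G × G,
          Real.exp (-α * d z.2 x₀) * |u z.2| ^ p * (d z.1 z.2 * ω z.1 z.2))
          = ∑' z : G × G,
            Real.exp (-α * d z.1 x₀) * |u z.1| ^ p * (d z.1 z.2 * ω z.1 z.2) := by
        rw [← he]
        apply tsum_congr
        intro z
        simp only [Equiv.prodComm_apply, Prod.fst_swap, Prod.snd_swap]
        rw [hd_symm z.2 z.1, hω_symm z.2 z.1]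
      rw [heq]; exact hb1_le
    set c : ℝ := (α + 1/(n:ℝ)) * Real.exp (s * α) with hc
    have hc0 : 0 ≤ c := by
      rw [hc]
      have : 0 ≤ α + 1/(n:ℝ) := by positivity
      positivity
    -- termwise bound
    have hbnd : ∀ z : G × G,
        φ z.1 * ((|u z.2| ^ p - |u z.1| ^ p) * ω z.1 z.2)
          + φ z.2 * ((|u z.1| ^ p - |u z.2| ^ p) * ω z.1 z.2)
        ≤ c * (Real.exp (-α * d z.1 x₀) * |u z.1| ^ p * (d z.1 z.2 * ω z.1 z.2))
          + c * (Real.exp (-α * d z.2 x₀) * |u z.2| ^ p * (d z.1 z.2 * ω z.1 z.2)) := by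
      rintro ⟨x, y⟩
      simp only []
      rcases (hω_nonneg x y).eq_or_lt with hω0 | hωpos
      · rw [← hω0]
        simp
      · have hdxy := hjump x y hωpos
        have habs : |d x x₀ - d y x₀| ≤ d x y := by
          rw [abs_sub_le_iff]
          constructor
          · linarith [hd_tri x x₀ y]
          · have h5 := hd_tri y x₀ x
            have h6 := hd_symm x y
            linarith
        have hFlip := aux_exp_abs hα habs hdxy
        have hηl := hηlip x y
        have hFxpos : 0 < Real.exp (-α * d x x₀) := Real.exp_pos _
        have hFypos : 0 < Real.exp (-α * d y x₀) := Real.exp_pos _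
        set Fx : ℝ := Real.exp (-α * d x x₀) with hFx
        set Fy : ℝ := Real.exp (-α * d y x₀) with hFy
        set m : ℝ := min Fx Fy with hm
        have hm0 : 0 < m := lt_min hFxpos hFypos
        have hFxm : Fx ≤ Real.exp (s * α) * m := by
          have e1 : Fx ≤ Real.exp (s * α) * Fx := by nlinarith
          have e2 : Fx ≤ Real.exp (s * α) * Fy := by
            rw [hFx, hFy, ← Real.exp_add]
            apply Real.exp_le_exp.2
            have h8 : d y x₀ - d x x₀ ≤ |d x x₀ - d y x₀| := by
              rw [abs_sub_comm]; exact le_abs_self _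
            nlinarith
          rcases le_total Fx Fy with h | h
          · rw [hm, min_eq_left h]; exact e1
          · rw [hm, min_eq_right h]; exact e2
        have hdn : 0 ≤ d x y := hd_nonneg x y
        have hφlip : |φ x - φ y| ≤ c * (m * d x y) := by
          have hsplit : φ x - φ y = Fx * (η x - η y) + (Fx - Fy) * η y := by
            simp only [hφdef]
            ring
          rw [hsplit]
          have t0 : |Fx * (η x - η y) + (Fx - Fy) * η y|
              ≤ Fx * |η x - η y| + |Fx - Fy| * η y := by
            calc |Fx * (η x - η y) + (Fx - Fy) * η y|
                ≤ |Fx * (η x - η y)| + |(Fx - Fy) * η y| := abs_add_le _ _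
              _ = Fx * |η x - η y| + |Fx - Fy| * η y := by
                  rw [abs_mul, abs_mul, abs_of_nonneg (hη0 y), abs_of_pos hFxpos]
          have t1 : Fx * |η x - η y| ≤ Fx * (d x y / (n:ℝ)) :=
            mul_le_mul_of_nonneg_left hηl hFxpos.le
          have t2 : |Fx - Fy| * η y ≤ α * Real.exp (s * α) * (m * d x y) := by
            calc |Fx - Fy| * η y ≤ |Fx - Fy| * 1 :=
                  mul_le_mul_of_nonneg_left (hη1 y) (abs_nonneg _)
              _ = |Fx - Fy| := mul_one _
              _ ≤ α * Real.exp (s * α) * (m * d x y) := hFlip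
          have t3 : Fx * (d x y / (n:ℝ)) ≤ (Real.exp (s * α) * m) * (d x y / (n:ℝ)) :=
            mul_le_mul_of_nonneg_right hFxm (by positivity)
          have t4 : (Real.exp (s * α) * m) * (d x y / (n:ℝ))
              = (1/(n:ℝ)) * Real.exp (s * α) * (m * d x y) := by
            field_simp
          have t5 : c * (m * d x y)
              = α * Real.exp (s * α) * (m * d x y)
                + (1/(n:ℝ)) * Real.exp (s * α) * (m * d x y) := by
            rw [hc]; ring
          rw [t5]
          calc |Fx * (η x - η y) + (Fx - Fy) * η y|
              ≤ Fx * |η x - η y| + |Fx - Fy| * η y := t0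
            _ ≤ Fx * (d x y / (n:ℝ)) + α * Real.exp (s * α) * (m * d x y) := by linarith
            _ ≤ (1/(n:ℝ)) * Real.exp (s * α) * (m * d x y)
                + α * Real.exp (s * α) * (m * d x y) := by
                have := le_trans t3 (le_of_eq t4)
                linarith
            _ = α * Real.exp (s * α) * (m * d x y)
                + (1/(n:ℝ)) * Real.exp (s * α) * (m * d x y) := by ring
        have hWW : |(|u y| ^ p - |u x| ^ p)| ≤ |u x| ^ p + |u y| ^ p := by
          have h9 := abs_sub (|u y| ^ p) (|u x| ^ p)
          rw [abs_of_nonneg (hW_nonneg y), abs_of_nonneg (hW_nonneg x)] at h9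
          linarith
        have lhs_eq : φ x * ((|u y| ^ p - |u x| ^ p) * ω x y)
            + φ y * ((|u x| ^ p - |u y| ^ p) * ω x y)
            = (φ x - φ y) * ((|u y| ^ p - |u x| ^ p) * ω x y) := by ring
        rw [lhs_eq]
        have habs1 : (φ x - φ y) * ((|u y| ^ p - |u x| ^ p) * ω x y)
            ≤ |φ x - φ y| * ((|u x| ^ p + |u y| ^ p) * ω x y) := by
          have h1 := le_abs_self ((φ x - φ y) * ((|u y| ^ p - |u x| ^ p) * ω x y))
          refine le_trans h1 ?_
          rw [abs_mul, abs_mul, abs_of_nonneg (hω_nonneg x y)]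
          exact mul_le_mul_of_nonneg_left
            (mul_le_mul_of_nonneg_right hWW (hω_nonneg x y)) (abs_nonneg _)
        have habs2 : |φ x - φ y| * ((|u x| ^ p + |u y| ^ p) * ω x y)
            ≤ (c * (m * d x y)) * ((|u x| ^ p + |u y| ^ p) * ω x y) :=
          mul_le_mul_of_nonneg_right hφlip
            (mul_nonneg (by positivity) (hω_nonneg x y))
        have habs3 : (c * (m * d x y)) * ((|u x| ^ p + |u y| ^ p) * ω x y)
            ≤ c * (Fx * |u x| ^ p * (d x y * ω x y))
              + c * (Fy * |u y| ^ p * (d x y * ω x y)) := by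
          have hm1 : m * |u x| ^ p ≤ Fx * |u x| ^ p :=
            mul_le_mul_of_nonneg_right (min_le_left _ _) (hW_nonneg x)
          have hm2 : m * |u y| ^ p ≤ Fy * |u y| ^ p :=
            mul_le_mul_of_nonneg_right (min_le_right _ _) (hW_nonneg y)
          have hcd : 0 ≤ c * (d x y * ω x y) :=
            mul_nonneg hc0 (mul_nonneg hdn (hω_nonneg x y))
          calc (c * (m * d x y)) * ((|u x| ^ p + |u y| ^ p) * ω x y)
              = (c * (d x y * ω x y)) * (m * |u x| ^ p + m * |u y| ^ p) := by ring
            _ ≤ (c * (d x y * ω x y)) * (Fx * |u x| ^ p + Fy * |u y| ^ p) :=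
                mul_le_mul_of_nonneg_left (by linarith) hcd
            _ = c * (Fx * |u x| ^ p * (d x y * ω x y))
                + c * (Fy * |u y| ^ p * (d x y * ω x y)) := by ring
        linarith
    have hRHS_sum : Summable (fun z : G × G =>
        c * (Real.exp (-α * d z.1 x₀) * |u z.1| ^ p * (d z.1 z.2 * ω z.1 z.2))
          + c * (Real.exp (-α * d z.2 x₀) * |u z.2| ^ p * (d z.1 z.2 * ω z.1 z.2))) :=
      (hb1_sum.mul_left c).add (hb2_sum.mul_left c)
    have h2A : (∑' z : G × G, φ z.1 * ((|u z.2| ^ p - |u z.1| ^ p) * ω z.1 z.2))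
          + (∑' z : G × G, φ z.2 * ((|u z.1| ^ p - |u z.2| ^ p) * ω z.1 z.2))
        ≤ c * (C₀ * S) + c * (C₀ * S) := by
      rw [← Summable.tsum_add hA_sum hA'_sum]
      calc (∑' z : G × G, (φ z.1 * ((|u z.2| ^ p - |u z.1| ^ p) * ω z.1 z.2)
              + φ z.2 * ((|u z.1| ^ p - |u z.2| ^ p) * ω z.1 z.2)))
          ≤ ∑' z : G × G,
              (c * (Real.exp (-α * d z.1 x₀) * |u z.1| ^ p * (d z.1 z.2 * ω z.1 z.2))
              + c * (Real.exp (-α * d z.2 x₀) * |u z.2| ^ p * (d z.1 z.2 * ω z.1 z.2))) :=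
            Summable.tsum_le_tsum hbnd (hA_sum.add hA'_sum) hRHS_sum
        _ = c * (∑' z : G × G,
              Real.exp (-α * d z.1 x₀) * |u z.1| ^ p * (d z.1 z.2 * ω z.1 z.2))
            + c * (∑' z : G × G,
              Real.exp (-α * d z.2 x₀) * |u z.2| ^ p * (d z.1 z.2 * ω z.1 z.2)) := by
            rw [Summable.tsum_add (hb1_sum.mul_left c) (hb2_sum.mul_left c),
              tsum_mul_left, tsum_mul_left]
        _ ≤ c * (C₀ * S) + c * (C₀ * S) := by
            have g1 := mul_le_mul_of_nonneg_left hb1_le hc0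
            have g2 := mul_le_mul_of_nonneg_left hb2_le hc0
            linarith
    have hAA : (∑' z : G × G, φ z.1 * ((|u z.2| ^ p - |u z.1| ^ p) * ω z.1 z.2))
        ≤ c * (C₀ * S) := by
      have h := h2A
      rw [← hswap] at h
      linarith
    calc c₀ * p * (∑' x, η x * (|u x| ^ p * Real.exp (-α * d x x₀) * μ x))
        ≤ ∑' x, φ x * (∑' y, (|u y| ^ p - |u x| ^ p) * ω x y) := hstep1
      _ = ∑' z : G × G, φ z.1 * ((|u z.2| ^ p - |u z.1| ^ p) * ω z.1 z.2) := hstep2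
      _ ≤ c * (C₀ * S) := hAA
      _ = (α + 1/(n:ℝ)) * (Real.exp (s * α) * (C₀ * S)) := by rw [hc]; ring
  -- pass to the limit
  have hT_tendsto : Filter.Tendsto
      (fun n : ℕ => ∑' x, max 0 (min 1 (2 - d x x₀ / (n:ℝ)))
        * (|u x| ^ p * Real.exp (-α * d x x₀) * μ x))
      Filter.atTop (nhds S) := by
    rw [hS]
    apply tendsto_tsum_of_dominated_convergence hℓp
    · intro x
      apply tendsto_nhds_of_eventually_eq
      apply Filter.eventually_atTop.2
      refine ⟨max 1 ⌈d x x₀⌉₊, fun n hn => ?_⟩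
      have hn1 : 1 ≤ n := le_trans (le_max_left _ _) hn
      have hn0 : (0:ℝ) < n := by
        have : (1:ℝ) ≤ n := by exact_mod_cast hn1
        linarith
      have hdn : d x x₀ ≤ (n:ℝ) := by
        refine le_trans (Nat.le_ceil _) ?_
        exact_mod_cast le_trans (le_max_right 1 ⌈d x x₀⌉₊) hn
      have h1 : (1:ℝ) ≤ 2 - d x x₀ / (n:ℝ) := by
        have : d x x₀ / (n:ℝ) ≤ 1 := (div_le_one hn0).2 hdn
        linarith
      rw [min_eq_left h1, max_eq_right (by norm_num : (0:ℝ) ≤ 1), one_mul]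
    · apply Filter.Eventually.of_forall
      intro n x
      rw [Real.norm_eq_abs,
        abs_of_nonneg (mul_nonneg (le_max_left _ _) (hterm_nonneg x))]
      apply mul_le_of_le_one_left (hterm_nonneg x)
      exact max_le (by norm_num) (min_le_left _ _)
  have hR_tendsto : Filter.Tendsto
      (fun n : ℕ => (α + 1/(n:ℝ)) * (Real.exp (s * α) * (C₀ * S)))
      Filter.atTop (nhds (α * (Real.exp (s * α) * (C₀ * S)))) := by
    have h1 : Filter.Tendsto (fun n : ℕ => α + 1/(n:ℝ)) Filter.atTop (nhds α) := by
      have h2 := tendsto_one_div_atTop_nhds_zero_nat (𝕜 := ℝ)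
      simpa using (tendsto_const_nhds (x := α) (f := Filter.atTop)).add h2
    exact h1.mul_const _
  have hfin : c₀ * p * S ≤ α * (Real.exp (s * α) * (C₀ * S)) := by
    apply le_of_tendsto_of_tendsto (hT_tendsto.const_mul (c₀ * p)) hR_tendsto
    filter_upwards [Filter.eventually_ge_atTop 1] with n hn
    exact hmain n hn
  have hS0 : S = 0 := by
    rcases hS_nonneg.eq_or_lt with h | h
    · exact h.symm
    · exfalso
      have h1 := mul_lt_mul_of_pos_right hαcond h
      have h2 : α * (Real.exp (s * α) * (C₀ * S)) = C₀ * α * Real.exp (s * α) * S := by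
        ring
      rw [h2] at hfin
      linarith
  intro x
  by_contra hne
  have hterm_le : |u x| ^ p * Real.exp (-α * d x x₀) * μ x ≤ S :=
    Summable.le_tsum hℓp x fun y _ => hterm_nonneg y
  have hpos : 0 < |u x| ^ p * Real.exp (-α * d x x₀) * μ x := by
    have h1 : 0 < |u x| ^ p := Real.rpow_pos_of_pos (abs_pos.2 hne) p
    exact mul_pos (mul_pos h1 (hF_pos x)) (hμ x)
  rw [hS0] at hterm_le
  linarith
end
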